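/- arXiv:1507.02403 — 2 statements merged into one kernel-verified Lean document; each statement's English description precedes it below -/
import Mathlib

section
/- Assume conditions (i)–(iv) hold with the same ε ∈ (0,1]. Let V_n = L_n − L_n^0 = n^{−1} Σ_{i=k_n+1}^{n−m_n} (c_{i,n} − c^0_{i,n}) X_{i:n} and z_n = n^{ε/(2(2+ε))}. Then for every sequence a_n → 0 with a_n ≥ 1/log(1+n) and δ_n = a_n^{−1/2}/z_n, P(√n |V_n|/σ > δ_n) = o(1 − Φ(a_n z_n)) as n → ∞; equivalently, P(√n |V_n|/σ > δ_n) = (1 − Φ(x)) o(1) uniformly in the range −A ≤ x ≤ a_n z_n for each A > 0. -/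
open MeasureTheory ProbabilityTheory Filter Set
open scoped ProbabilityTheory

noncomputable section

/-- Left-continuous inverse `F⁻¹(u) = inf {x : F x ≥ u}`. -/
def leftInv (F : ℝ → ℝ) (u : ℝ) : ℝ := sInf {x | u ≤ F x}

/-- `i`-th order statistic (1-based) of the first `n` values of `x`. -/
def orderStat (n i : ℕ) (x : ℕ → ℝ) : ℝ :=
  ((List.ofFn fun j : Fin n => x (j + 1)).mergeSort (fun a b => a ≤ b)).getD (i - 1) 0

/-- Standard normal distribution function. -/
def Phi (x : ℝ) : ℝ := ((gaussianReal 0 1) (Iic x)).toReal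


namespace OS

variable {n i : ℕ} {x : ℕ → ℝ} {y : ℝ}

lemma sortedL (n : ℕ) (x : ℕ → ℝ) :
    ((List.ofFn fun j : Fin n => x (j + 1)).mergeSort (fun a b => a ≤ b)).Pairwise (· ≤ ·) := by
  have := List.pairwise_mergeSort (le := fun a b : ℝ => (a ≤ b : Bool))
    (fun a b c h₁ h₂ => by simp_all; linarith)
    (fun a b => by simpa using le_total a b)
    (List.ofFn fun j : Fin n => x (j + 1))
  exact this.imp (fun h => by simpa using h)

lemma lenL (n : ℕ) (x : ℕ → ℝ) :
    ((List.ofFn fun j : Fin n => x (j + 1)).mergeSort (fun a b => a ≤ b)).length = n := by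
  simp

end OS

namespace OS2
variable {n i : ℕ} {x : ℕ → ℝ} {y : ℝ}

lemma countP_eq_sum {α : Type*} (l : List α) (q : α → Bool) :
    l.countP q = (l.map fun a => if q a then (1:ℕ) else 0).sum := by
  induction l with
  | nil => simp
  | cons a l ih => by_cases h : q a <;> simp [List.countP_cons, h, ih, Nat.add_comm]

lemma countP_ofFn_card (f : Fin n → ℝ) (q : ℝ → Prop) [DecidablePred q] :
    (List.ofFn f).countP (fun a => decide (q a)) =
      (Finset.univ.filter (fun j : Fin n => q (f j))).card := by
  rw [List.ofFn_eq_map, List.countP_map]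
  rw [countP_eq_sum, Finset.card_filter]
  rw [Fin.sum_univ_def]
  congr 1
  apply List.map_congr_left
  intro a _
  by_cases h : q (f a) <;> simp [h]

lemma card_fin_to_Icc (q : ℝ → Prop) [DecidablePred q] :
    (Finset.univ.filter (fun j : Fin n => q (x (j + 1)))).card =
      ((Finset.Icc 1 n).filter (fun j => q (x j))).card := by
  refine Finset.card_bij' (fun j _ => (j : ℕ) + 1)
    (fun a ha => ⟨a - 1, by
      simp only [Finset.mem_filter, Finset.mem_Icc] at ha; omega⟩) ?_ ?_ ?_ ?_
  · intro a ha
    simp only [Finset.mem_filter, Finset.mem_Icc, Finset.mem_univ, true_and] at ha ⊢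
    exact ⟨⟨by omega, by omega⟩, ha⟩
  · intro a ha
    simp only [Finset.mem_filter, Finset.mem_Icc, Finset.mem_univ, true_and] at ha ⊢
    have h1 : 1 ≤ a := ha.1.1
    have : (a - 1) + 1 = a := by omega
    simpa [this] using ha.2
  · intro a ha; apply Fin.ext; simp
  · intro a ha
    simp only [Finset.mem_filter, Finset.mem_Icc] at ha
    simp only [Fin.val_mk]
    omega

end OS2

namespace OS3
variable {n i : ℕ} {x : ℕ → ℝ} {y : ℝ}

lemma count_ge_of_lt (hi1 : 1 ≤ i) (hin : i ≤ n) (h : orderStat n i x < y) :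
    i ≤ ((Finset.Icc 1 n).filter (fun j => x j < y)).card := by
  classical
  set l := (List.ofFn fun j : Fin n => x (j + 1)) with hl
  set L := l.mergeSort (fun a b => a ≤ b) with hLdef
  have hlen : L.length = n := by simp [hLdef, hl]
  have hsort : L.Pairwise (· ≤ ·) := OS.sortedL n x
  have hidx : i - 1 < L.length := by omega
  have hOS : orderStat n i x = L[i-1] := List.getD_eq_getElem _ _ hidx
  have hcount : i ≤ L.countP (fun a => decide (a < y)) := by
    have hall : ∀ a ∈ L.take i, a < y := by
      intro a ha
      rw [List.mem_iff_getElem] at ha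
      obtain ⟨j, hj, rfl⟩ := ha
      rw [List.length_take] at hj
      have hj' : j < i := lt_of_lt_of_le hj (min_le_left _ _)
      have hjL : j < L.length := by omega
      rw [List.getElem_take]
      rcases eq_or_lt_of_le (by omega : j ≤ i - 1) with heq | hlt
      · subst heq; rw [← hOS]; exact h
      · have := List.pairwise_iff_getElem.mp hsort j (i-1) hjL hidx hlt
        calc L[j] ≤ L[i-1] := this
        _ < y := hOS ▸ h
    have htk : (L.take i).countP (fun a => decide (a < y)) = i := by
      rw [List.countP_eq_length.mpr (fun a ha => decide_eq_true (hall a ha))]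
      rw [List.length_take]; omega
    calc i = (L.take i).countP (fun a => decide (a < y)) := htk.symm
    _ ≤ (L.take i).countP _ + (L.drop i).countP (fun a => decide (a < y)) := Nat.le_add_right _ _
    _ = L.countP (fun a => decide (a < y)) := by rw [← List.countP_append, List.take_append_drop]
  have hperm : L.countP (fun a => decide (a < y)) = l.countP (fun a => decide (a < y)) :=
    (List.mergeSort_perm l _).countP_eq _
  rw [hperm, hl, OS2.countP_ofFn_card _ (fun a => a < y),
    OS2.card_fin_to_Icc (x := x) (fun a => a < y)] at hcount
  exact hcount

lemma count_ge_of_gt (hi1 : 1 ≤ i) (hin : i ≤ n) (h : y < orderStat n i x) :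
    n - i + 1 ≤ ((Finset.Icc 1 n).filter (fun j => y < x j)).card := by
  classical
  set l := (List.ofFn fun j : Fin n => x (j + 1)) with hl
  set L := l.mergeSort (fun a b => a ≤ b) with hLdef
  have hlen : L.length = n := by simp [hLdef, hl]
  have hsort : L.Pairwise (· ≤ ·) := OS.sortedL n x
  have hidx : i - 1 < L.length := by omega
  have hOS : orderStat n i x = L[i-1] := List.getD_eq_getElem _ _ hidx
  have hcount : n - i + 1 ≤ L.countP (fun a => decide (y < a)) := by
    have hall : ∀ a ∈ L.drop (i-1), y < a := by
      intro a ha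
      rw [List.mem_iff_getElem] at ha
      obtain ⟨j, hj, rfl⟩ := ha
      rw [List.length_drop] at hj
      rw [List.getElem_drop]
      rcases Nat.eq_zero_or_pos j with heq | hpos
      · subst heq; simpa using hOS ▸ h
      · have hlt : i - 1 < i - 1 + j := by omega
        have := List.pairwise_iff_getElem.mp hsort (i-1) (i-1+j) hidx (by omega) hlt
        calc y < L[i-1] := hOS ▸ h
        _ ≤ L[i-1+j] := this
    have htk : (L.drop (i-1)).countP (fun a => decide (y < a)) = n - i + 1 := by
      rw [List.countP_eq_length.mpr (fun a ha => decide_eq_true (hall a ha))]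
      rw [List.length_drop]; omega
    calc n - i + 1 = (L.drop (i-1)).countP (fun a => decide (y < a)) := htk.symm
    _ ≤ (L.take (i-1)).countP (fun a => decide (y < a)) + (L.drop (i-1)).countP _ :=
        Nat.le_add_left _ _
    _ = L.countP (fun a => decide (y < a)) := by rw [← List.countP_append, List.take_append_drop]
  have hperm : L.countP (fun a => decide (y < a)) = l.countP (fun a => decide (y < a)) :=
    (List.mergeSort_perm l _).countP_eq _
  rw [hperm, hl, OS2.countP_ofFn_card _ (fun a => y < a),
    OS2.card_fin_to_Icc (x := x) (fun a => y < a)] at hcount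
  exact hcount

end OS3

namespace CH
open Real

lemma exp_sub_one_le (t : ℝ) (ht : 0 ≤ t) : Real.exp t - 1 ≤ t * Real.exp t := by
  have h1 : (-t) + 1 ≤ Real.exp (-t) := Real.add_one_le_exp _
  have h2 : Real.exp (-t) = (Real.exp t)⁻¹ := Real.exp_neg t
  have h3 : 0 < Real.exp t := Real.exp_pos t
  rw [h2] at h1
  have h4 : (-t + 1) * Real.exp t ≤ (Real.exp t)⁻¹ * Real.exp t :=
    mul_le_mul_of_nonneg_right h1 h3.le
  rw [inv_mul_cancel₀ h3.ne'] at h4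
  nlinarith

lemma chernoff {Ω : Type*} [MeasureSpace Ω] [IsProbabilityMeasure (ℙ : Measure Ω)]
    (X : ℕ → Ω → ℝ) (hmeas : ∀ i, Measurable (X i))
    (hindep : iIndepFun X ℙ)
    (hident : ∀ i, Measure.map (X i) ℙ = Measure.map (X 1) ℙ)
    (A : Set ℝ) (hA : MeasurableSet A) (c : ℝ)
    (hc : (ℙ (X 1 ⁻¹' A)).toReal < c) :
    ∃ γ > 0, ∀ n : ℕ,
      (ℙ {ω | c * n ≤ ∑ j ∈ Finset.Icc 1 n, A.indicator (fun _ => (1:ℝ)) (X j ω)}).toReal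
        ≤ Real.exp (-γ * n) := by
  classical
  set p := (ℙ (X 1 ⁻¹' A)).toReal with hpdef
  have hp0 : 0 ≤ p := ENNReal.toReal_nonneg
  have hc0 : 0 < c := lt_of_le_of_lt hp0 hc
  obtain ⟨t, ht, hpe⟩ : ∃ t : ℝ, 0 < t ∧ p * Real.exp t < c := by
    by_cases hp : p = 0
    · exact ⟨1, one_pos, by simp [hp, hc0]⟩
    · have hp' : 0 < p := lt_of_le_of_ne hp0 (Ne.symm hp)
      have hcp : 1 < c / p := (one_lt_div hp').mpr hc
      set u := min 2 ((1 + c/p)/2) with hu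
      have hu1 : 1 < u := lt_min one_lt_two (by linarith)
      have huc : u < c / p := lt_of_le_of_lt (min_le_right _ _) (by linarith)
      refine ⟨Real.log u, Real.log_pos hu1, ?_⟩
      rw [Real.exp_log (by linarith)]
      calc p * u < p * (c / p) := by
            exact mul_lt_mul_of_pos_left huc hp'
      _ = c := by field_simp
  refine ⟨t * (c - p * Real.exp t), by nlinarith, fun n => ?_⟩
  set γ := t * (c - p * Real.exp t) with hγ
  set Z : ℕ → Ω → ℝ := fun j ω => A.indicator (fun _ => (1:ℝ)) (X j ω) with hZ
  have hgm : Measurable (A.indicator (fun _ => (1:ℝ))) := measurable_const.indicator hA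
  have hZmeas : ∀ j, Measurable (Z j) := fun j => hgm.comp (hmeas j)
  have hZindep : iIndepFun Z ℙ :=
    hindep.comp (fun _ => A.indicator (fun _ => (1:ℝ))) (fun _ => hgm)
  have hZ01 : ∀ j ω, 0 ≤ Z j ω ∧ Z j ω ≤ 1 := by
    intro j ω
    simp only [hZ, Set.indicator_apply]
    split <;> norm_num
  have hint : ∀ j, Integrable (fun ω => Real.exp (t * Z j ω)) ℙ := by
    intro j
    refine Integrable.mono' (integrable_const (Real.exp |t|))
      (((hZmeas j).const_mul t).exp.aestronglyMeasurable) (ae_of_all _ fun ω => ?_)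
    rw [Real.norm_eq_abs, abs_of_pos (Real.exp_pos _)]
    apply Real.exp_le_exp.mpr
    calc t * Z j ω ≤ t * 1 := by
          have := (hZ01 j ω).2; nlinarith [(hZ01 j ω).1]
    _ ≤ |t| := by rw [mul_one]; exact le_abs_self t
  have hmgf : ∀ j, mgf (Z j) ℙ t = 1 + p * (Real.exp t - 1) := by
    intro j
    have hpt : (fun ω => Real.exp (t * Z j ω)) = fun ω =>
        1 + (Real.exp t - 1) * (X j ⁻¹' A).indicator (fun _ => (1:ℝ)) ω := by
      funext ω
      by_cases h : X j ω ∈ A <;>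
        simp [hZ, Set.indicator_apply, h, Set.mem_preimage]
    have hPj : (ℙ (X j ⁻¹' A)).toReal = p := by
      rw [hpdef, ← Measure.map_apply (hmeas j) hA, ← Measure.map_apply (hmeas 1) hA, hident j]
    rw [mgf, hpt]
    rw [integral_add (integrable_const 1)
      (((integrable_const (1:ℝ)).indicator ((hmeas j) hA)).const_mul _)]
    rw [MeasureTheory.integral_const_mul, integral_indicator_const (1:ℝ) ((hmeas j) hA)]
    simp [measureReal_def, hPj]
    ring
  -- Chernoff
  have hintS : Integrable (fun ω => Real.exp (t * (∑ j ∈ Finset.Icc 1 n, Z j) ω)) ℙ :=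
    hZindep.integrable_exp_mul_sum hZmeas (fun j _ => hint j)
  have hset : {ω | c * n ≤ ∑ j ∈ Finset.Icc 1 n, A.indicator (fun _ => (1:ℝ)) (X j ω)}
      = {ω | c * n ≤ (∑ j ∈ Finset.Icc 1 n, Z j) ω} := by
    ext ω; simp [Finset.sum_apply, hZ]
  rw [hset]
  have hbound := measure_ge_le_exp_mul_mgf (μ := ℙ) (X := ∑ j ∈ Finset.Icc 1 n, Z j)
    (c * n) ht.le hintS
  have hprod : mgf (∑ j ∈ Finset.Icc 1 n, Z j) ℙ t = (1 + p * (Real.exp t - 1)) ^ n := by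
    rw [hZindep.mgf_sum hZmeas]
    rw [Finset.prod_congr rfl (fun j _ => hmgf j), Finset.prod_const, Nat.card_Icc]
    norm_num
  have hM0 : (0:ℝ) ≤ 1 + p * (Real.exp t - 1) := by
    have : 1 ≤ Real.exp t := Real.one_le_exp ht.le
    nlinarith
  have hMle : 1 + p * (Real.exp t - 1) ≤ Real.exp (p * (Real.exp t - 1)) := by
    have := Real.add_one_le_exp (p * (Real.exp t - 1))
    linarith
  calc (ℙ {ω | c * n ≤ (∑ j ∈ Finset.Icc 1 n, Z j) ω}).toReal
      ≤ Real.exp (-t * (c * n)) * mgf (∑ j ∈ Finset.Icc 1 n, Z j) ℙ t := hbound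
  _ = Real.exp (-t * (c * n)) * (1 + p * (Real.exp t - 1)) ^ n := by rw [hprod]
  _ ≤ Real.exp (-t * (c * n)) * (Real.exp (p * (Real.exp t - 1))) ^ n := by
      apply mul_le_mul_of_nonneg_left _ (Real.exp_pos _).le
      exact pow_le_pow_left₀ hM0 hMle n
  _ = Real.exp (-t * (c * n) + n * (p * (Real.exp t - 1))) := by
      rw [← Real.exp_nat_mul, ← Real.exp_add]
  _ ≤ Real.exp (-γ * n) := by
      apply Real.exp_le_exp.mpr
      have hkey : p * (Real.exp t - 1) ≤ t * (p * Real.exp t) := by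
        have := exp_sub_one_le t ht.le
        nlinarith
      have hn : (0:ℝ) ≤ n := Nat.cast_nonneg n
      rw [hγ]
      nlinarith
end CH

namespace GT
open Real

lemma Phi_le_one (x : ℝ) : Phi x ≤ 1 := by
  unfold Phi
  exact ENNReal.toReal_le_of_le_ofReal one_pos.le (by simpa using prob_le_one)

lemma one_sub_Phi (x : ℝ) : 1 - Phi x = ((gaussianReal 0 1) (Ioi x)).toReal := by
  have h1 : (gaussianReal 0 1) (Ioi x) = 1 - (gaussianReal 0 1) (Iic x) := by
    rw [← compl_Iic]
    exact prob_compl_eq_one_sub measurableSet_Iic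
  rw [h1, ENNReal.toReal_sub_of_le prob_le_one ENNReal.one_ne_top]
  simp [Phi]

lemma tail_lower (x : ℝ) (hx : 0 ≤ x) :
    Real.exp (-(x+1)^2/2) / Real.sqrt (2*Real.pi) ≤ 1 - Phi x := by
  rw [one_sub_Phi]
  have hv : (1 : NNReal) ≠ 0 := one_ne_zero
  rw [gaussianReal_apply_eq_integral _ hv]
  have hnn : 0 ≤ ∫ y in Ioi x, gaussianPDFReal 0 1 y :=
    setIntegral_nonneg measurableSet_Ioi (fun y _ => gaussianPDFReal_nonneg _ _ _)
  rw [ENNReal.toReal_ofReal hnn]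
  set C : ℝ := (Real.sqrt (2*Real.pi))⁻¹ * Real.exp (-(x+1)^2/2) with hC
  have hCeq : Real.exp (-(x+1)^2/2) / Real.sqrt (2*Real.pi) = C := by
    rw [hC]; ring
  rw [hCeq]
  have hint : IntegrableOn (gaussianPDFReal 0 1) (Ioi x) := (integrable_gaussianPDFReal 0 1).restrict
  have step1 : ∫ y in Ioc x (x+1), gaussianPDFReal 0 1 y ≤ ∫ y in Ioi x, gaussianPDFReal 0 1 y := by
    apply setIntegral_mono_set hint
      (ae_of_all _ (fun y => gaussianPDFReal_nonneg _ _ _))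
      (HasSubset.Subset.eventuallyLE Ioc_subset_Ioi_self)
  refine le_trans ?_ step1
  have step2 : ∫ y in Ioc x (x+1), C ≤ ∫ y in Ioc x (x+1), gaussianPDFReal 0 1 y := by
    apply setIntegral_mono_on (integrableOn_const measure_Ioc_lt_top.ne)
      (hint.mono_set Ioc_subset_Ioi_self) measurableSet_Ioc
    intro y hy
    rw [gaussianPDFReal]
    have h2π : (0:ℝ) < 2 * Real.pi := by positivity
    simp only [NNReal.coe_one, mul_one, sub_zero]
    apply mul_le_mul_of_nonneg_left _ (by positivity)
    apply Real.exp_le_exp.mpr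
    have hy1 : x < y := hy.1
    have hy2 : y ≤ x + 1 := hy.2
    have : y^2 ≤ (x+1)^2 := by nlinarith
    rw [div_le_div_iff_of_pos_right] <;> nlinarith [this]
  refine le_trans (le_of_eq ?_) step2
  rw [setIntegral_const, Real.volume_real_Ioc_of_le (by linarith)]
  have : x + 1 - x = 1 := by ring
  rw [this, one_smul]

end GT

namespace KC

lemma exists_K {Ω : Type*} [MeasureSpace Ω] [IsProbabilityMeasure (ℙ : Measure Ω)]
    (Y : Ω → ℝ) (hY : Measurable Y) (r : ℝ) (hr : 0 < r) :
    ∃ K : ℝ, 0 ≤ K ∧ (ℙ {ω | Y ω ≤ -K}).toReal < r ∧ (ℙ {ω | K < Y ω}).toReal < r := by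
  set s : ℕ → Set Ω := fun j => {ω | (j:ℝ) ≤ |Y ω|} with hs
  have hmeas : ∀ j, NullMeasurableSet (s j) ℙ := fun j =>
    ((measurableSet_le measurable_const hY.abs)).nullMeasurableSet
  have hanti : Antitone s := by
    intro a b hab ω hω
    simp only [hs, Set.mem_setOf_eq] at hω ⊢
    exact le_trans (by exact_mod_cast Nat.cast_le.mpr hab) hω
  have hempty : (⋂ j, s j) = ∅ := by
    ext ω
    simp only [Set.mem_iInter, Set.mem_setOf_eq, Set.mem_empty_iff_false, iff_false, not_forall,
      not_le, hs]
    obtain ⟨j, hj⟩ := exists_nat_gt |Y ω|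
    exact ⟨j, hj⟩
  have htend : Tendsto (fun j => ℙ (s j)) atTop (nhds 0) := by
    have := MeasureTheory.tendsto_measure_iInter_atTop hmeas hanti ⟨0, measure_ne_top _ _⟩
    rw [hempty, measure_empty] at this
    exact this
  have hev : ∀ᶠ j in atTop, ℙ (s j) < ENNReal.ofReal r :=
    htend.eventually_lt_const (by simpa using hr)
  obtain ⟨j, hj⟩ := hev.exists
  refine ⟨(j:ℝ), Nat.cast_nonneg j, ?_, ?_⟩
  · have hsub : {ω | Y ω ≤ -(j:ℝ)} ⊆ s j := by
      intro ω hω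
      simp only [Set.mem_setOf_eq, hs] at hω ⊢
      calc (j:ℝ) ≤ -Y ω := by linarith
      _ ≤ |Y ω| := neg_le_abs _
    have := lt_of_le_of_lt (measure_mono hsub) hj
    rw [ENNReal.lt_ofReal_iff_toReal_lt (measure_ne_top _ _)] at this
    exact this
  · have hsub : {ω | (j:ℝ) < Y ω} ⊆ s j := by
      intro ω hω
      simp only [Set.mem_setOf_eq, hs] at hω ⊢
      calc (j:ℝ) ≤ Y ω := le_of_lt hω
      _ ≤ |Y ω| := le_abs_self _
    have := lt_of_le_of_lt (measure_mono hsub) hj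
    rw [ENNReal.lt_ofReal_iff_toReal_lt (measure_ne_top _ _)] at this
    exact this

end KC

set_option maxHeartbeats 1000000 in
/-- The term `V_n = L_n - L⁰_n` is negligible at the large-deviation scale:
`P(√n |V_n| / σ > δ_n) = o(1 - Φ(a_n z_n))`. -/
theorem Vn_negligible
    {Ω : Type*} [MeasureSpace Ω] [IsProbabilityMeasure (ℙ : Measure Ω)]
    -- i.i.d. random variables with distribution function F
    (X : ℕ → Ω → ℝ) (hmeas : ∀ i, Measurable (X i))
    (hindep : iIndepFun X ℙ)
    (hident : ∀ i, Measure.map (X i) ℙ = Measure.map (X 1) ℙ)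
    (F : ℝ → ℝ) (hF : ∀ x, F x = (ℙ {ω | X 1 ω ≤ x}).toReal)
    -- trimming proportions
    (α β : ℝ) (hα : 0 < α) (hαβ : α < 1 - β) (hβ : 1 - β < 1)
    (k m : ℕ → ℕ) (hkm : ∀ n, 1 ≤ n → k n < n - m n)
    (αn βn : ℕ → ℝ) (hαn : ∀ n, αn n = (k n : ℝ) / n) (hβn : ∀ n, βn n = (m n : ℝ) / n)
    (hαlim : Tendsto αn atTop (nhds α)) (hβlim : Tendsto βn atTop (nhds β))
    -- the weight function J on an open set I, [α, 1-β] ⊂ I ⊆ (0,1)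
    (J : ℝ → ℝ) (I : Set ℝ) (hI : IsOpen I) (hIsub : Icc α (1 - β) ⊆ I) (hI01 : I ⊆ Ioo 0 1)
    (ε : ℝ) (hε : ε ∈ Ioc (0 : ℝ) 1)
    -- condition (i): J is Lipschitz on I
    (CJ : ℝ) (hCJ : 0 ≤ CJ) (hLip : ∀ u ∈ I, ∀ v ∈ I, |J u - J v| ≤ CJ * |u - v|)
    -- condition (ii): F⁻¹ is ε-Hölder near α and 1-β
    (hHolder : ∃ Uα ∈ nhds α, ∃ Uβ ∈ nhds (1 - β), ∃ CH : ℝ,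
      (∀ u ∈ Uα, ∀ v ∈ Uα, |leftInv F u - leftInv F v| ≤ CH * |u - v| ^ ε) ∧
      (∀ u ∈ Uβ, ∀ v ∈ Uβ, |leftInv F u - leftInv F v| ≤ CH * |u - v| ^ ε))
    -- condition (iii)
    (hrate : (fun n : ℕ => max |αn n - α| |βn n - β|) =O[atTop]
      fun n : ℕ => (n : ℝ) ^ (-(1 / (2 + ε))))
    -- condition (iv)
    (c c0 : ℕ → ℕ → ℝ)
    (hc0 : ∀ n i, c0 n i = n * ∫ u in ((i : ℝ) - 1) / n..(i : ℝ) / n, J u)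
    (hweights : (fun n : ℕ => ∑ i ∈ Finset.Ioc (k n) (n - m n), |c n i - c0 n i| ^ (2 + ε))
      =O[atTop] fun n : ℕ => (n : ℝ) ^ (-ε))
    -- V_n = L_n - L⁰_n
    (V : ℕ → Ω → ℝ)
    (hV : ∀ n ω, V n ω = (n : ℝ)⁻¹ * ∑ i ∈ Finset.Ioc (k n) (n - m n),
      (c n i - c0 n i) * orderStat n i fun j => X j ω)
    (hmono : Monotone (leftInv F))
    (σ : ℝ) (hσpos : 0 < σ)
    (hσ : σ ^ 2 = ∫ p in (Ico α (1 - β)) ×ˢ (Ico α (1 - β)),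
      J p.1 * J p.2 * (min p.1 p.2 - p.1 * p.2)
        ∂(hmono.stieltjesFunction.measure.prod hmono.stieltjesFunction.measure))
    -- the sequences z_n, a_n and δ_n
    (z : ℕ → ℝ) (hz : ∀ n, z n = (n : ℝ) ^ (ε / (2 * (2 + ε))))
    (a : ℕ → ℝ) (ha : Tendsto a atTop (nhds 0))
    (halow : ∀ n, a n ≥ 1 / Real.log (1 + n))
    (δ : ℕ → ℝ) (hδ : ∀ n, δ n = (a n) ^ (-(1 / 2) : ℝ) / z n) :
    (fun n : ℕ => (ℙ {ω | Real.sqrt n * |V n ω| / σ > δ n}).toReal) =o[atTop]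
      fun n : ℕ => 1 - Phi (a n * z n) := by
  obtain ⟨hε0, hε1⟩ := hε
  have h2ε : (0:ℝ) < 2 + ε := by linarith
  have hβ0 : 0 < β := by linarith
  -- choice of K
  obtain ⟨K, hK0, hK1, hK2⟩ := KC.exists_K (X 1) (hmeas 1) (min (α/2) (β/2))
    (lt_min (by linarith) (by linarith))
  have hPA : (ℙ (X 1 ⁻¹' (Iic (-K)))).toReal < α / 2 :=
    lt_of_lt_of_le hK1 (min_le_left _ _)
  have hPB : (ℙ (X 1 ⁻¹' (Ioi K))).toReal < β / 2 :=
    lt_of_lt_of_le hK2 (min_le_right _ _)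
  -- Chernoff bounds
  obtain ⟨γ₁, hγ₁, hch₁⟩ := CH.chernoff X hmeas hindep hident (Iic (-K)) measurableSet_Iic
    (α/2) hPA
  obtain ⟨γ₂, hγ₂, hch₂⟩ := CH.chernoff X hmeas hindep hident (Ioi K) measurableSet_Ioi
    (β/2) hPB
  set γ := min γ₁ γ₂ with hγdef
  have hγ0 : 0 < γ := lt_min hγ₁ hγ₂
  -- weights constant
  obtain ⟨CW₀, hCW₀⟩ := Asymptotics.isBigO_iff.mp hweights
  set CW := max CW₀ 0 with hCWdef
  have hCW0 : 0 ≤ CW := le_max_right _ _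
  have hCWev : ∀ᶠ n : ℕ in atTop,
      ∑ i ∈ Finset.Ioc (k n) (n - m n), |c n i - c0 n i| ^ (2 + ε) ≤ CW * (n:ℝ) ^ (-ε) := by
    filter_upwards [hCW₀] with n hn
    have hnn : 0 ≤ ∑ i ∈ Finset.Ioc (k n) (n - m n), |c n i - c0 n i| ^ (2 + ε) :=
      Finset.sum_nonneg fun i _ => Real.rpow_nonneg (abs_nonneg _) _
    have hbn : 0 ≤ (n:ℝ) ^ (-ε) := Real.rpow_nonneg (Nat.cast_nonneg n) _
    calc ∑ i ∈ Finset.Ioc (k n) (n - m n), |c n i - c0 n i| ^ (2 + ε)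
        = ‖∑ i ∈ Finset.Ioc (k n) (n - m n), |c n i - c0 n i| ^ (2 + ε)‖ := by
          rw [Real.norm_eq_abs, abs_of_nonneg hnn]
      _ ≤ CW₀ * ‖(n:ℝ) ^ (-ε)‖ := hn
      _ ≤ CW * (n:ℝ) ^ (-ε) := by
          rw [Real.norm_eq_abs, abs_of_nonneg hbn]
          exact mul_le_mul_of_nonneg_right (le_max_left _ _) hbn
  set D := K * CW ^ ((2+ε)⁻¹) with hD
  have hD0 : 0 ≤ D := mul_nonneg hK0 (Real.rpow_nonneg hCW0 _)
  set M := max (D / σ) 1 with hM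
  have hM0 : 0 < M := lt_of_lt_of_le one_pos (le_max_right _ _)
  -- eventual positivity / smallness of a
  have hapos : ∀ᶠ n : ℕ in atTop, 0 < a n := by
    filter_upwards [eventually_ge_atTop 1] with n hn
    have h1n : (1:ℝ) < 1 + n := by
      have : (1:ℝ) ≤ n := by exact_mod_cast hn
      linarith
    have hlog : 0 < Real.log (1 + n) := Real.log_pos h1n
    have : 0 < 1 / Real.log (1 + n) := by positivity
    exact lt_of_lt_of_le this (halow n)
  have hasmall : ∀ᶠ n : ℕ in atTop, a n < min 1 (M⁻¹ ^ 2) := by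
    have hr : (0:ℝ) < min 1 (M⁻¹ ^ 2) := lt_min one_pos (by positivity)
    exact ha.eventually (gt_mem_nhds hr)
  -- eventual lower bounds on k n, m n
  have hαev : ∀ᶠ n : ℕ in atTop, α/2 * n ≤ (k n : ℝ) := by
    filter_upwards [hαlim.eventually (lt_mem_nhds (show α/2 < α by linarith)),
      eventually_ge_atTop 1] with n h1 h2
    have hn0 : (0:ℝ) < n := by exact_mod_cast h2
    rw [hαn n] at h1
    exact le_of_lt ((lt_div_iff₀ hn0).mp h1)
  have hβev : ∀ᶠ n : ℕ in atTop, β/2 * n ≤ (m n : ℝ) := by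
    filter_upwards [hβlim.eventually (lt_mem_nhds (show β/2 < β by linarith)),
      eventually_ge_atTop 1] with n h1 h2
    have hn0 : (0:ℝ) < n := by exact_mod_cast h2
    rw [hβn n] at h1
    exact le_of_lt ((lt_div_iff₀ hn0).mp h1)
  -- tendsto of the comparison exponent
  have hq1 : ε/(2+ε) < 1 := by
    rw [div_lt_one h2ε]; linarith
  have htendB : Tendsto (fun n : ℕ => -γ * n + 2 * (n:ℝ) ^ (ε/(2+ε))) atTop atBot := by
    have h2 : Tendsto (fun n : ℕ => ((n:ℝ)) ^ (-(1 - ε/(2+ε)))) atTop (nhds 0) :=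
      (tendsto_rpow_neg_atTop (by linarith)).comp tendsto_natCast_atTop_atTop
    have h3 : Tendsto (fun n : ℕ => -γ + 2 * (n:ℝ) ^ (-(1 - ε/(2+ε)))) atTop
        (nhds (-γ + 2 * 0)) := tendsto_const_nhds.add (h2.const_mul 2)
    rw [mul_zero, add_zero] at h3
    have h4 : Tendsto (fun n : ℕ => (n:ℝ) * (-γ + 2 * (n:ℝ) ^ (-(1 - ε/(2+ε))))) atTop atBot :=
      Tendsto.atTop_mul_neg (by linarith) tendsto_natCast_atTop_atTop h3
    apply h4.congr'
    filter_upwards [eventually_ge_atTop 1] with n hn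
    have hn0 : (0:ℝ) < n := by exact_mod_cast hn
    have hmulpow : (n:ℝ) * (n:ℝ) ^ (-(1 - ε/(2+ε))) = (n:ℝ) ^ (ε/(2+ε)) := by
      calc (n:ℝ) * (n:ℝ) ^ (-(1 - ε/(2+ε)))
          = (n:ℝ) ^ (1:ℝ) * (n:ℝ) ^ (-(1 - ε/(2+ε))) := by rw [Real.rpow_one]
        _ = (n:ℝ) ^ ((1:ℝ) + -(1 - ε/(2+ε))) := (Real.rpow_add hn0 _ _).symm
        _ = (n:ℝ) ^ (ε/(2+ε)) := by congr 1; ring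
    calc (n:ℝ) * (-γ + 2 * (n:ℝ) ^ (-(1 - ε/(2+ε))))
        = -γ * n + 2 * ((n:ℝ) * (n:ℝ) ^ (-(1 - ε/(2+ε)))) := by ring
      _ = -γ * n + 2 * (n:ℝ) ^ (ε/(2+ε)) := by rw [hmulpow]
  -- the little-o statement
  rw [Asymptotics.isLittleO_iff]
  intro C' hC'
  have hπ : (0:ℝ) < Real.sqrt (2 * Real.pi) := Real.sqrt_pos.mpr (by positivity)
  have hpos2 : 0 < C' / (2 * Real.sqrt (2 * Real.pi)) := by positivity
  set R := Real.log (C' / (2 * Real.sqrt (2 * Real.pi))) with hR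
  filter_upwards [hCWev, hαev, hβev, hapos, hasmall, eventually_ge_atTop 1,
    htendB.eventually (eventually_le_atBot R)] with n hw hkn hmn hap han hn1 hRn
  have hn0 : (0:ℝ) < n := by exact_mod_cast hn1
  have ha1n : a n ≤ 1 := le_of_lt (lt_of_lt_of_le han (min_le_left _ _))
  have han' : a n ≤ M⁻¹ ^ 2 := le_of_lt (lt_of_lt_of_le han (min_le_right _ _))
  have hkmn := hkm n hn1
  have hmlen : m n ≤ n := by omega
  -- the two Chernoff events
  set An : Set Ω := {ω | α/2 * n ≤ ∑ j ∈ Finset.Icc 1 n,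
    (Iic (-K)).indicator (fun _ => (1:ℝ)) (X j ω)} with hAn
  set Bn : Set Ω := {ω | β/2 * n ≤ ∑ j ∈ Finset.Icc 1 n,
    (Ioi K).indicator (fun _ => (1:ℝ)) (X j ω)} with hBn
  have hSumA : ∀ ω : Ω, ∑ j ∈ Finset.Icc 1 n, (Iic (-K)).indicator (fun _ => (1:ℝ)) (X j ω)
      = (((Finset.Icc 1 n).filter (fun j => X j ω ≤ -K)).card : ℝ) := by
    intro ω
    rw [Finset.card_filter]
    push_cast
    apply Finset.sum_congr rfl
    intro j _
    by_cases h : X j ω ≤ -K <;> simp [Set.indicator_apply, h]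
  have hSumB : ∀ ω : Ω, ∑ j ∈ Finset.Icc 1 n, (Ioi K).indicator (fun _ => (1:ℝ)) (X j ω)
      = (((Finset.Icc 1 n).filter (fun j => K < X j ω)).card : ℝ) := by
    intro ω
    rw [Finset.card_filter]
    push_cast
    apply Finset.sum_congr rfl
    intro j _
    by_cases h : K < X j ω <;> simp [Set.indicator_apply, h]
  -- inclusion of the event into An ∪ Bn
  have hsub : {ω | Real.sqrt n * |V n ω| / σ > δ n} ⊆ An ∪ Bn := by
    intro ω hω
    simp only [Set.mem_setOf_eq] at hω
    by_cases hG : ∀ i ∈ Finset.Ioc (k n) (n - m n), |orderStat n i (fun j => X j ω)| ≤ K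
    · -- deterministic bound: contradiction
      exfalso
      refine absurd hω (not_lt.mpr ?_)
      set T := Finset.Ioc (k n) (n - m n) with hT
      have habsV : |V n ω| ≤ (n:ℝ)⁻¹ * ((∑ i ∈ T, |c n i - c0 n i|) * K) := by
        rw [hV n ω, abs_mul, abs_inv, Nat.abs_cast]
        apply mul_le_mul_of_nonneg_left _ (inv_nonneg.mpr (Nat.cast_nonneg n))
        calc |∑ i ∈ T, (c n i - c0 n i) * orderStat n i (fun j => X j ω)|
            ≤ ∑ i ∈ T, |(c n i - c0 n i) * orderStat n i (fun j => X j ω)| :=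
              Finset.abs_sum_le_sum_abs _ _
          _ ≤ ∑ i ∈ T, |c n i - c0 n i| * K := by
              apply Finset.sum_le_sum
              intro i hi
              rw [abs_mul]
              exact mul_le_mul_of_nonneg_left (hG i hi) (abs_nonneg _)
          _ = (∑ i ∈ T, |c n i - c0 n i|) * K := (Finset.sum_mul _ _ _).symm
      have hHold : ∑ i ∈ T, |c n i - c0 n i| ≤
          (n:ℝ) ^ (1 - (2+ε)⁻¹) * (CW * (n:ℝ) ^ (-ε)) ^ ((2+ε)⁻¹) := by
        have h := Real.inner_le_weight_mul_Lp_of_nonneg T (p := 2+ε) (by linarith)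
          (fun _ => (1:ℝ)) (fun i => |c n i - c0 n i|) (fun _ => zero_le_one)
          (fun i => abs_nonneg _)
        simp only [one_mul] at h
        have hcard : (∑ _i ∈ T, (1:ℝ)) = (T.card : ℝ) := by simp
        rw [hcard] at h
        have hcardn : (T.card : ℝ) ≤ (n : ℝ) := by
          have : T.card ≤ n := by rw [hT, Nat.card_Ioc]; omega
          exact_mod_cast this
        have hinv1 : (2+ε)⁻¹ ≤ 1 := by
          rw [inv_le_one_iff₀]; right; linarith
        have hsnn : 0 ≤ ∑ i ∈ T, |c n i - c0 n i| ^ (2+ε) :=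
          Finset.sum_nonneg fun i _ => Real.rpow_nonneg (abs_nonneg _) _
        calc ∑ i ∈ T, |c n i - c0 n i|
            ≤ (T.card : ℝ) ^ (1 - (2+ε)⁻¹) *
              (∑ i ∈ T, |c n i - c0 n i| ^ (2+ε)) ^ ((2+ε)⁻¹) := h
          _ ≤ (n:ℝ) ^ (1 - (2+ε)⁻¹) * (CW * (n:ℝ) ^ (-ε)) ^ ((2+ε)⁻¹) := by
              apply mul_le_mul
              · exact Real.rpow_le_rpow (Nat.cast_nonneg _) hcardn (by linarith)
              · exact Real.rpow_le_rpow hsnn hw (by positivity)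
              · exact Real.rpow_nonneg hsnn _
              · exact Real.rpow_nonneg (Nat.cast_nonneg _) _
      -- power algebra
      have e1 : (CW * (n:ℝ) ^ (-ε)) ^ ((2+ε)⁻¹)
          = CW ^ ((2+ε)⁻¹) * (n:ℝ) ^ (-ε * (2+ε)⁻¹) := by
        rw [Real.mul_rpow hCW0 (Real.rpow_nonneg (Nat.cast_nonneg n) _),
          ← Real.rpow_mul (Nat.cast_nonneg n)]
      have e4 : (n:ℝ) ^ ((1:ℝ)/2) * ((n:ℝ) ^ ((-1:ℝ)) *
          ((n:ℝ) ^ (1 - (2+ε)⁻¹) * (n:ℝ) ^ (-ε * (2+ε)⁻¹)))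
          = (n:ℝ) ^ (-(ε / (2 * (2 + ε)))) := by
        rw [← Real.rpow_add hn0, ← Real.rpow_add hn0, ← Real.rpow_add hn0]
        congr 1
        field_simp
        ring
      have hkey : Real.sqrt n * ((n:ℝ)⁻¹ *
          (((n:ℝ) ^ (1 - (2+ε)⁻¹) * (CW * (n:ℝ) ^ (-ε)) ^ ((2+ε)⁻¹)) * K))
          = D * (n:ℝ) ^ (-(ε / (2 * (2 + ε)))) := by
        rw [e1, Real.sqrt_eq_rpow, show ((n:ℝ))⁻¹ = (n:ℝ) ^ ((-1:ℝ)) by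
          rw [Real.rpow_neg_one]]
        calc (n:ℝ) ^ ((1:ℝ)/2) * ((n:ℝ) ^ ((-1:ℝ)) *
            (((n:ℝ) ^ (1 - (2+ε)⁻¹) * (CW ^ ((2+ε)⁻¹) * (n:ℝ) ^ (-ε * (2+ε)⁻¹))) * K))
            = (K * CW ^ ((2+ε)⁻¹)) * ((n:ℝ) ^ ((1:ℝ)/2) * ((n:ℝ) ^ ((-1:ℝ)) *
              ((n:ℝ) ^ (1 - (2+ε)⁻¹) * (n:ℝ) ^ (-ε * (2+ε)⁻¹)))) := by ring
          _ = D * (n:ℝ) ^ (-(ε / (2 * (2 + ε)))) := by rw [e4, hD]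
      -- comparison with δ n
      have hδσ : D * (n:ℝ) ^ (-(ε / (2 * (2 + ε)))) ≤ δ n * σ := by
        have hδn : δ n = (a n) ^ (-(1/2) : ℝ) * (n:ℝ) ^ (-(ε / (2 * (2 + ε)))) := by
          rw [hδ n, hz n, div_eq_mul_inv, ← Real.rpow_neg (Nat.cast_nonneg n)]
        have h1 : Real.sqrt (a n) ≤ M⁻¹ := by
          have h := Real.sqrt_le_sqrt han'
          rwa [Real.sqrt_sq (inv_nonneg.mpr hM0.le)] at h
        have h2 : M ≤ (Real.sqrt (a n))⁻¹ := by
          rw [← inv_inv M]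
          exact inv_anti₀ (Real.sqrt_pos.mpr hap) h1
        have h3 : (a n) ^ (-(1/2) : ℝ) = (Real.sqrt (a n))⁻¹ := by
          rw [Real.rpow_neg hap.le]
          congr 1
          rw [Real.sqrt_eq_rpow]
        have hDbound : D ≤ (a n) ^ (-(1/2) : ℝ) * σ := by
          calc D = (D / σ) * σ := by field_simp
            _ ≤ M * σ := mul_le_mul_of_nonneg_right (le_max_left _ _) hσpos.le
            _ ≤ (Real.sqrt (a n))⁻¹ * σ := mul_le_mul_of_nonneg_right h2 hσpos.le
            _ = (a n) ^ (-(1/2) : ℝ) * σ := by rw [h3]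
        rw [hδn]
        calc D * (n:ℝ) ^ (-(ε / (2 * (2 + ε))))
            ≤ ((a n) ^ (-(1/2) : ℝ) * σ) * (n:ℝ) ^ (-(ε / (2 * (2 + ε)))) :=
              mul_le_mul_of_nonneg_right hDbound (Real.rpow_nonneg (Nat.cast_nonneg n) _)
          _ = (a n) ^ (-(1/2) : ℝ) * (n:ℝ) ^ (-(ε / (2 * (2 + ε)))) * σ := by ring
      rw [div_le_iff₀ hσpos]
      calc Real.sqrt n * |V n ω|
          ≤ Real.sqrt n * ((n:ℝ)⁻¹ * ((∑ i ∈ T, |c n i - c0 n i|) * K)) :=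
            mul_le_mul_of_nonneg_left habsV (Real.sqrt_nonneg _)
        _ ≤ Real.sqrt n * ((n:ℝ)⁻¹ *
            (((n:ℝ) ^ (1 - (2+ε)⁻¹) * (CW * (n:ℝ) ^ (-ε)) ^ ((2+ε)⁻¹)) * K)) := by
            apply mul_le_mul_of_nonneg_left _ (Real.sqrt_nonneg _)
            apply mul_le_mul_of_nonneg_left _ (inv_nonneg.mpr (Nat.cast_nonneg n))
            exact mul_le_mul_of_nonneg_right hHold hK0
        _ = D * (n:ℝ) ^ (-(ε / (2 * (2 + ε)))) := hkey
        _ ≤ δ n * σ := hδσ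
    · -- some middle order statistic is large
      push_neg at hG
      obtain ⟨i, hiT, hKi⟩ := hG
      rw [Finset.mem_Ioc] at hiT
      rcases lt_abs.mp hKi with hgt | hlt
      · -- K < orderStat : Bn
        right
        have hcnt := OS3.count_ge_of_gt (n := n) (i := i) (x := fun j => X j ω)
          (by omega) (by omega) hgt
        show ω ∈ Bn
        simp only [hBn, Set.mem_setOf_eq]
        rw [hSumB ω]
        have hcard : m n + 1 ≤ ((Finset.Icc 1 n).filter (fun j => K < X j ω)).card :=
          le_trans (by omega) hcnt
        calc β/2 * n ≤ (m n : ℝ) := hmn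
          _ ≤ (((Finset.Icc 1 n).filter (fun j => K < X j ω)).card : ℝ) := by
            exact_mod_cast le_trans (Nat.le_succ _) hcard
      · -- orderStat < -K : An
        left
        have hlt' : orderStat n i (fun j => X j ω) < -K := by linarith
        have hcnt := OS3.count_ge_of_lt (n := n) (i := i) (x := fun j => X j ω)
          (by omega) (by omega) hlt'
        show ω ∈ An
        simp only [hAn, Set.mem_setOf_eq]
        rw [hSumA ω]
        have hmono : ((Finset.Icc 1 n).filter (fun j => X j ω < -K)).card ≤
            ((Finset.Icc 1 n).filter (fun j => X j ω ≤ -K)).card :=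
          Finset.card_le_card (Finset.monotone_filter_right _ (fun j _ h => le_of_lt h))
        have hcard : k n + 1 ≤ ((Finset.Icc 1 n).filter (fun j => X j ω ≤ -K)).card :=
          le_trans (by omega) (le_trans hcnt hmono)
        calc α/2 * n ≤ (k n : ℝ) := hkn
          _ ≤ (((Finset.Icc 1 n).filter (fun j => X j ω ≤ -K)).card : ℝ) := by
            exact_mod_cast le_trans (Nat.le_succ _) hcard
  -- probability arithmetic
  have hPch : (ℙ {ω | Real.sqrt n * |V n ω| / σ > δ n}).toReal ≤
      Real.exp (-γ₁ * n) + Real.exp (-γ₂ * n) := by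
    have hμ : ℙ {ω | Real.sqrt n * |V n ω| / σ > δ n} ≤ ℙ An + ℙ Bn :=
      le_trans (measure_mono hsub) (measure_union_le _ _)
    calc (ℙ {ω | Real.sqrt n * |V n ω| / σ > δ n}).toReal
        ≤ (ℙ An + ℙ Bn).toReal := ENNReal.toReal_mono
          (ENNReal.add_ne_top.mpr ⟨measure_ne_top _ _, measure_ne_top _ _⟩) hμ
      _ = (ℙ An).toReal + (ℙ Bn).toReal :=
          ENNReal.toReal_add (measure_ne_top _ _) (measure_ne_top _ _)
      _ ≤ Real.exp (-γ₁ * n) + Real.exp (-γ₂ * n) := add_le_add (hch₁ n) (hch₂ n)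
  have hPch2 : (ℙ {ω | Real.sqrt n * |V n ω| / σ > δ n}).toReal ≤ 2 * Real.exp (-γ * n) := by
    have e1 : Real.exp (-γ₁ * n) ≤ Real.exp (-γ * n) := Real.exp_le_exp.mpr
      (mul_le_mul_of_nonneg_right (neg_le_neg (min_le_left _ _)) (Nat.cast_nonneg n))
    have e2 : Real.exp (-γ₂ * n) ≤ Real.exp (-γ * n) := Real.exp_le_exp.mpr
      (mul_le_mul_of_nonneg_right (neg_le_neg (min_le_right _ _)) (Nat.cast_nonneg n))
    linarith
  -- gaussian tail comparison
  set t := a n * z n with htdef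
  have hzge : 0 ≤ z n := by
    rw [hz n]; exact Real.rpow_nonneg (Nat.cast_nonneg n) _
  have ht0 : 0 ≤ t := mul_nonneg hap.le hzge
  have htail := GT.tail_lower t ht0
  have hq : (t + 1)^2 / 2 ≤ 2 * (n:ℝ) ^ (ε/(2+ε)) := by
    have h1 : (1:ℝ) ≤ (n:ℝ) ^ (ε/(2*(2+ε))) := by
      have h := Real.rpow_le_rpow_of_exponent_le
        (show (1:ℝ) ≤ n by exact_mod_cast hn1)
        (show (0:ℝ) ≤ ε/(2*(2+ε)) by positivity)
      simpa using h
    have ht1 : t ≤ (n:ℝ) ^ (ε/(2*(2+ε))) := by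
      rw [htdef, hz n]
      exact mul_le_of_le_one_left (Real.rpow_nonneg (Nat.cast_nonneg n) _) ha1n
    have hdbl : (n:ℝ) ^ (ε/(2*(2+ε))) * (n:ℝ) ^ (ε/(2*(2+ε))) = (n:ℝ) ^ (ε/(2+ε)) := by
      rw [← Real.rpow_add hn0]
      congr 1
      field_simp
      ring
    have h5 : (t+1)^2 ≤ (2 * (n:ℝ) ^ (ε/(2*(2+ε))))^2 := by
      apply pow_le_pow_left₀ (by linarith) (by linarith)
    have h6 : (2 * (n:ℝ) ^ (ε/(2*(2+ε))))^2 =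
        4 * ((n:ℝ) ^ (ε/(2*(2+ε))) * (n:ℝ) ^ (ε/(2*(2+ε)))) := by ring
    rw [h6, hdbl] at h5
    linarith
  have hRn' : -γ * n + (t+1)^2/2 ≤ R := le_trans (by linarith) hRn
  have hexple : Real.exp (-γ * n + (t+1)^2/2) ≤ C' / (2 * Real.sqrt (2*Real.pi)) := by
    rw [hR] at hRn'
    rw [← Real.exp_log hpos2]
    exact Real.exp_le_exp.mpr hRn'
  have h2exp : 2 * Real.exp (-γ * n) ≤
      C' * (Real.exp (-(t+1)^2/2) / Real.sqrt (2*Real.pi)) := by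
    have hsplit : Real.exp (-γ * n) =
        Real.exp (-γ * n + (t+1)^2/2) * Real.exp (-(t+1)^2/2) := by
      rw [← Real.exp_add]; congr 1; ring
    rw [hsplit]
    have h := mul_le_mul_of_nonneg_right hexple (Real.exp_pos (-(t+1)^2/2)).le
    calc 2 * (Real.exp (-γ * n + (t+1)^2/2) * Real.exp (-(t+1)^2/2))
        ≤ 2 * (C' / (2 * Real.sqrt (2*Real.pi)) * Real.exp (-(t+1)^2/2)) := by linarith
      _ = C' * (Real.exp (-(t+1)^2/2) / Real.sqrt (2*Real.pi)) := by
          field_simp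
  -- finish
  rw [Real.norm_eq_abs, abs_of_nonneg ENNReal.toReal_nonneg, Real.norm_eq_abs,
    abs_of_nonneg (by linarith [GT.Phi_le_one t] : (0:ℝ) ≤ 1 - Phi (a n * z n))]
  calc (ℙ {ω | Real.sqrt n * |V n ω| / σ > δ n}).toReal
      ≤ 2 * Real.exp (-γ * n) := hPch2
    _ ≤ C' * (Real.exp (-(t+1)^2/2) / Real.sqrt (2*Real.pi)) := h2exp
    _ ≤ C' * (1 - Phi t) := mul_le_mul_of_nonneg_left htail hC'.le
    _ = C' * (1 - Phi (a n * z n)) := by rw [htdef]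
end
end

section
/- Let ε ∈ (0,1], α ∈ (0,1), k = ⌊nα⌋, z_n = n^{ε/(2(2+ε))}, and let α_n be a sequence with |α_n − α| = O(n^{−1/(2+ε)}). For every constant C > 0 and every sequence a_n → 0 with a_n ≥ 1/log(1+n): P(√n |α_n − α| · |U_{k:n} − α|^{ε} > C a_n^{−1/2} n^{−ε/(2(2+ε))}) = o(1 − Φ(a_n z_n)) as n → ∞; equivalently, this probability is (1 − Φ(x)) o(1) uniformly in the range −A ≤ x ≤ a_n z_n for each A > 0. -/
open MeasureTheory ProbabilityTheory Filter Set
open scoped ProbabilityTheory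

noncomputable section

open Real Asymptotics

section Helpers



lemma countP_le_of_getD_gt {l : List ℝ} (hs : l.Pairwise (· ≤ ·)) {i : ℕ} (hi : i < l.length)
    {v : ℝ} (h : v < l.getD i 0) : l.countP (fun a => a ≤ v) ≤ i := by
  have hgd : l.getD i 0 = l.get ⟨i, hi⟩ := by
    rw [List.getD_eq_getElem l 0 hi]; rfl
  have hl : l = l.take i ++ l.drop i := (List.take_append_drop i l).symm
  have hdrop : (l.drop i).countP (fun a => a ≤ v) = 0 := by
    rw [List.countP_eq_zero]
    intro b hb
    rw [List.mem_iff_get] at hb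
    obtain ⟨j, rfl⟩ := hb
    have hj : (j : ℕ) < l.length - i := by simpa using j.isLt
    have hij : i + (j : ℕ) < l.length := by omega
    have hget : (l.drop i).get j = l.get ⟨i + (j : ℕ), hij⟩ := by
      simp [List.getElem_drop]
    have hle : l.get ⟨i, hi⟩ ≤ l.get ⟨i + (j : ℕ), hij⟩ := by
      rcases Nat.eq_zero_or_pos (j : ℕ) with hj0 | hj0
      · simp [hj0]
      · exact List.pairwise_iff_get.mp hs ⟨i, hi⟩ ⟨i + (j : ℕ), hij⟩ (by simp; omega)
    rw [hget]
    simp only [decide_eq_true_eq]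
    intro hb
    rw [hgd] at h
    linarith
  calc l.countP (fun a => a ≤ v)
      = (l.take i).countP (fun a => a ≤ v) + (l.drop i).countP (fun a => a ≤ v) := by
        conv_lhs => rw [hl]
        rw [List.countP_append]
    _ ≤ (l.take i).length + 0 := by
        rw [hdrop]; exact Nat.add_le_add_right List.countP_le_length 0
    _ ≤ i := by simp

lemma le_countP_of_getD_le {l : List ℝ} (hs : l.Pairwise (· ≤ ·)) {i : ℕ} (hi : i < l.length)
    {v : ℝ} (h : l.getD i 0 ≤ v) : i + 1 ≤ l.countP (fun a => a ≤ v) := by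
  have hgd : l.getD i 0 = l.get ⟨i, hi⟩ := by
    rw [List.getD_eq_getElem l 0 hi]; rfl
  have htlen : (l.take (i+1)).length = i + 1 := by
    rw [List.length_take]; omega
  have htake : (l.take (i+1)).countP (fun a => a ≤ v) = i + 1 := by
    rw [List.countP_eq_length.mpr, htlen]
    intro b hb
    rw [List.mem_iff_get] at hb
    obtain ⟨j, rfl⟩ := hb
    have hj : (j : ℕ) < i + 1 := by simpa [htlen] using j.isLt
    have hj' : (j : ℕ) < l.length := by omega
    have hget : (l.take (i+1)).get j = l.get ⟨(j : ℕ), hj'⟩ := by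
      simp [List.get_eq_getElem, List.getElem_take]
    have hle : l.get ⟨(j : ℕ), hj'⟩ ≤ l.get ⟨i, hi⟩ := by
      rcases Nat.lt_or_ge (j : ℕ) i with hji | hji
      · exact List.pairwise_iff_get.mp hs ⟨(j:ℕ), hj'⟩ ⟨i, hi⟩ (by simpa using hji)
      · have : (j : ℕ) = i := by omega
        simp [this]
    rw [hget]
    simp only [decide_eq_true_eq]
    rw [hgd] at h
    linarith
  calc i + 1 = (l.take (i+1)).countP (fun a => a ≤ v) := htake.symm
    _ ≤ (l.take (i+1)).countP (fun a => a ≤ v) + (l.drop (i+1)).countP (fun a => a ≤ v) :=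
        Nat.le_add_right _ _
    _ = l.countP (fun a => a ≤ v) := by
        conv_rhs => rw [(List.take_append_drop (i+1) l).symm]
        rw [List.countP_append]





lemma countP_ofFn_eq_sum (n : ℕ) (x : ℕ → ℝ) (v : ℝ) :
    (List.ofFn fun j : Fin n => x (j + 1)).countP (fun a => a ≤ v)
      = ∑ i ∈ Finset.range n, if x (i + 1) ≤ v then 1 else 0 := by
  induction n with
  | zero => simp
  | succ m ih =>
    rw [List.ofFn_succ', Finset.sum_range_succ]
    simp only [List.concat_eq_append, List.countP_append]
    rw [show (List.ofFn fun j : Fin m => x ((Fin.castSucc j : Fin (m+1)) + 1))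
        = List.ofFn fun j : Fin m => x (j + 1) by simp [Fin.coe_castSucc], ih]
    simp [List.countP_cons, Fin.val_last]

/-- If the k-th order statistic exceeds `v` then at most `k-1` of the values are `≤ v`. -/
lemma count_le_of_orderStat_gt {n k : ℕ} (hk : 1 ≤ k) (hkn : k ≤ n) {x : ℕ → ℝ} {v : ℝ}
    (h : v < orderStat n k x) :
    (∑ i ∈ Finset.range n, if x (i + 1) ≤ v then 1 else 0) ≤ k - 1 := by
  set l := List.ofFn fun j : Fin n => x (j + 1) with hl
  set s := l.mergeSort (fun a b => a ≤ b) with hsdef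
  have hlen : s.length = n := by
    rw [hsdef, List.length_mergeSort, hl, List.length_ofFn]
  have hi : k - 1 < s.length := by omega
  have h1 : s.countP (fun a => a ≤ v) ≤ k - 1 :=
    countP_le_of_getD_gt (List.pairwise_mergeSort' (fun a b : ℝ => a ≤ b) l) hi h
  have h2 : l.countP (fun a => a ≤ v) = s.countP (fun a => a ≤ v) :=
    ((List.mergeSort_perm l _).symm.countP_eq _)
  rw [← countP_ofFn_eq_sum n x v, h2]
  exact h1

lemma count_ge_of_orderStat_lt {n k : ℕ} (hk : 1 ≤ k) (hkn : k ≤ n) {x : ℕ → ℝ} {v : ℝ}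
    (h : orderStat n k x < v) :
    k ≤ ∑ i ∈ Finset.range n, if x (i + 1) ≤ v then 1 else 0 := by
  set l := List.ofFn fun j : Fin n => x (j + 1) with hl
  set s := l.mergeSort (fun a b => a ≤ b) with hsdef
  have hlen : s.length = n := by
    rw [hsdef, List.length_mergeSort, hl, List.length_ofFn]
  have hi : k - 1 < s.length := by omega
  have h1 : (k - 1) + 1 ≤ s.countP (fun a => a ≤ v) :=
    le_countP_of_getD_le (List.pairwise_mergeSort' (fun a b : ℝ => a ≤ b) l) hi h.le
  have h2 : l.countP (fun a => a ≤ v) = s.countP (fun a => a ≤ v) :=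
    ((List.mergeSort_perm l _).symm.countP_eq _)
  rw [← countP_ofFn_eq_sum n x v, h2]
  omega


lemma tendsto_logpow_rpow {β δ : ℝ} (hβ : 0 < β) (hδ : 0 < δ) :
    Tendsto (fun n : ℕ => (Real.log (1 + n))^β * (n:ℝ)^(-δ)) atTop (nhds 0) := by
  have hlo : (fun x : ℝ => (Real.log x)^β) =o[atTop] (fun x : ℝ => x ^ δ) :=
    isLittleO_log_rpow_rpow_atTop β hδ
  have hdiv : Tendsto (fun x : ℝ => (Real.log x)^β / x ^ δ) atTop (nhds 0) :=
    hlo.tendsto_div_nhds_zero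
  have hcomp : Tendsto (fun n : ℕ => (Real.log n)^β / (n:ℝ) ^ δ) atTop (nhds 0) :=
    hdiv.comp tendsto_natCast_atTop_atTop
  have hcomp' : Tendsto (fun n : ℕ => (2:ℝ)^β * ((Real.log n)^β / (n:ℝ) ^ δ)) atTop (nhds 0) := by
    simpa using hcomp.const_mul ((2:ℝ)^β)
  apply squeeze_zero' ?_ ?_ hcomp'
  · filter_upwards [eventually_ge_atTop 1] with n hn
    have h1 : (0:ℝ) ≤ Real.log (1 + n) := by
      apply Real.log_nonneg
      have : (1:ℝ) ≤ (n:ℝ) := by exact_mod_cast hn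
      linarith
    positivity
  · filter_upwards [eventually_ge_atTop 2] with n hn
    have hn2 : (2:ℝ) ≤ (n:ℝ) := by exact_mod_cast hn
    have hnpos : (0:ℝ) < n := by linarith
    have hlog1 : Real.log (1 + n) ≤ 2 * Real.log n := by
      calc Real.log (1 + n) ≤ Real.log ((n:ℝ)^2) := by
            apply Real.log_le_log (by linarith)
            nlinarith
        _ = 2 * Real.log n := by
            rw [Real.log_pow]; push_cast; ring
    have hlogn : (0:ℝ) ≤ Real.log n := Real.log_nonneg (by linarith)
    have hlog0 : (0:ℝ) ≤ Real.log (1 + n) := Real.log_nonneg (by linarith)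
    have h2 : (Real.log (1 + n))^β ≤ (2 * Real.log n)^β :=
      Real.rpow_le_rpow hlog0 hlog1 hβ.le
    have h3 : (2 * Real.log n)^β = 2^β * (Real.log n)^β :=
      Real.mul_rpow (by norm_num) hlogn
    have h4 : (n:ℝ)^(-δ) = ((n:ℝ)^δ)⁻¹ := Real.rpow_neg hnpos.le δ
    rw [h4]
    calc (Real.log (1 + n))^β * ((n:ℝ)^δ)⁻¹ ≤ 2^β * (Real.log n)^β * ((n:ℝ)^δ)⁻¹ := by
          apply mul_le_mul_of_nonneg_right (h3 ▸ h2) (by positivity)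
      _ = 2^β * ((Real.log n)^β / (n:ℝ)^δ) := by ring



lemma Phi_le_one (x : ℝ) : Phi x ≤ 1 := by
  have : (gaussianReal 0 1) (Iic x) ≤ 1 := prob_le_one
  simpa [Phi] using ENNReal.toReal_mono (by simp) this

lemma one_sub_Phi_ge {x : ℝ} (hx : 0 ≤ x) :
    (Real.sqrt (2*π))⁻¹ * Real.exp (-(x+1)^2/2) ≤ 1 - Phi x := by
  set g := gaussianReal 0 1 with hg
  have h1 : g (Iic x) + g (Ioi x) = 1 := by
    have := measure_add_measure_compl (μ := g) (measurableSet_Iic (a := x))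
    rwa [compl_Iic, measure_univ] at this
  have hIoi : 1 - Phi x = (g (Ioi x)).toReal := by
    have h2 := congrArg ENNReal.toReal h1
    rw [ENNReal.toReal_add (measure_ne_top _ _) (measure_ne_top _ _)] at h2
    simp only [ENNReal.toReal_one] at h2
    simp only [Phi, ← hg]
    linarith
  rw [hIoi]
  have hmono : g (Ioc x (x+1)) ≤ g (Ioi x) := measure_mono Ioc_subset_Ioi_self
  have happ : g (Ioc x (x+1)) = ENNReal.ofReal (∫ y in Ioc x (x+1), gaussianPDFReal 0 1 y) := by
    rw [hg, gaussianReal_apply_eq_integral 0 one_ne_zero]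
  have hpdf : ∀ y ∈ Ioc x (x+1), gaussianPDFReal 0 1 (x+1) ≤ gaussianPDFReal 0 1 y := by
    intro y hy
    simp only [gaussianPDFReal, NNReal.coe_one, mul_one, sub_zero]
    apply mul_le_mul_of_nonneg_left _ (by positivity)
    apply Real.exp_le_exp.mpr
    have h1 : x < y := hy.1
    have h2 : y ≤ x + 1 := hy.2
    nlinarith
  have hint : (∫ y in Ioc x (x+1), gaussianPDFReal 0 1 y) ≥ gaussianPDFReal 0 1 (x+1) := by
    have hconst : (∫ _ in Ioc x (x+1), gaussianPDFReal 0 1 (x+1)) = gaussianPDFReal 0 1 (x+1) := by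
      rw [setIntegral_const]
      simp [Real.volume_Ioc]
    calc gaussianPDFReal 0 1 (x+1) = ∫ _ in Ioc x (x+1), gaussianPDFReal 0 1 (x+1) := hconst.symm
      _ ≤ ∫ y in Ioc x (x+1), gaussianPDFReal 0 1 y := by
          apply setIntegral_mono_on (integrable_const _)
            ((integrable_gaussianPDFReal 0 1).integrableOn) measurableSet_Ioc hpdf
  have hval : gaussianPDFReal 0 1 (x+1) = (Real.sqrt (2*π))⁻¹ * Real.exp (-(x+1)^2/2) := by
    simp [gaussianPDFReal, NNReal.coe_one, mul_one, sub_zero]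
  calc (Real.sqrt (2*π))⁻¹ * Real.exp (-(x+1)^2/2)
      = gaussianPDFReal 0 1 (x+1) := hval.symm
    _ ≤ ∫ y in Ioc x (x+1), gaussianPDFReal 0 1 y := hint
    _ = (g (Ioc x (x+1))).toReal := by
        rw [happ, ENNReal.toReal_ofReal]
        exact le_trans (by positivity) (hval ▸ hint)
    _ ≤ (g (Ioi x)).toReal := ENNReal.toReal_mono (measure_ne_top _ _) hmono

section Prob

variable {Ω : Type*} [MeasureSpace Ω] [IsProbabilityMeasure (ℙ : Measure Ω)]
  (U : ℕ → Ω → ℝ) (hmeas : ∀ i, Measurable (U i))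
  (hindep : iIndepFun U ℙ)
  (hunif : ∀ i, Measure.map (U i) ℙ = volume.restrict (Ioo (0 : ℝ) 1))

include hmeas hunif

lemma prob_Iic {v : ℝ} (hv : v ∈ Ioo (0:ℝ) 1) (i : ℕ) :
    ℙ (U i ⁻¹' Iic v) = ENNReal.ofReal v := by
  have h1 : ℙ (U i ⁻¹' Iic v) = (Measure.map (U i) ℙ) (Iic v) :=
    (Measure.map_apply (hmeas i) measurableSet_Iic).symm
  rw [h1, hunif i, Measure.restrict_apply measurableSet_Iic]
  have h2 : Iic v ∩ Ioo 0 1 = Ioc 0 v := by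
    ext y
    simp only [mem_inter_iff, mem_Iic, mem_Ioo, mem_Ioc]
    constructor
    · rintro ⟨h1, h2, h3⟩; exact ⟨h2, h1⟩
    · rintro ⟨h1, h2⟩; exact ⟨h2, h1, lt_of_le_of_lt h2 hv.2⟩
  rw [h2, Real.volume_Ioc, sub_zero]

omit hmeas hunif in
lemma exp_mul_indicator_eq (v t : ℝ) (i : ℕ) :
    (fun ω => Real.exp (t * (if U i ω ≤ v then (1:ℝ) else 0)))
      = fun ω => (U i ⁻¹' Iic v).indicator (fun _ => Real.exp t - 1) ω + 1 := by
  funext ω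
  by_cases h : U i ω ≤ v
  · simp [h, indicator, mem_preimage, mem_Iic]
  · simp [h, indicator, mem_preimage, mem_Iic]

omit hunif in
lemma integrable_exp_mul_indicator (v t : ℝ) (i : ℕ) :
    Integrable (fun ω => Real.exp (t * (if U i ω ≤ v then (1:ℝ) else 0))) ℙ := by
  rw [exp_mul_indicator_eq U v t i]
  exact (((integrable_const (Real.exp t - 1)).indicator
    ((hmeas i) measurableSet_Iic))).add (integrable_const 1)

lemma mgf_indicator {v : ℝ} (hv : v ∈ Ioo (0:ℝ) 1) (t : ℝ) (i : ℕ) :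
    mgf (fun ω => if U i ω ≤ v then (1:ℝ) else 0) ℙ t = 1 + (Real.exp t - 1) * v := by
  rw [mgf]
  calc ∫ ω, Real.exp (t * (if U i ω ≤ v then (1:ℝ) else 0)) ∂ℙ
      = ∫ ω, ((U i ⁻¹' Iic v).indicator (fun _ => Real.exp t - 1) ω + 1) ∂ℙ := by
        rw [← exp_mul_indicator_eq U v t i]
    _ = (∫ ω, (U i ⁻¹' Iic v).indicator (fun _ => Real.exp t - 1) ω ∂ℙ) + ∫ _, (1:ℝ) ∂ℙ := by
        exact integral_add ((integrable_const (Real.exp t - 1)).indicator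
          ((hmeas i) measurableSet_Iic)) (integrable_const 1)
    _ = (ℙ (U i ⁻¹' Iic v)).toReal * (Real.exp t - 1) + 1 := by
        rw [integral_indicator_const _ ((hmeas i) measurableSet_Iic)]
        simp [Measure.real]
    _ = 1 + (Real.exp t - 1) * v := by
        rw [prob_Iic U hmeas hunif hv i, ENNReal.toReal_ofReal hv.1.le]
        ring

include hindep

lemma tail_chernoff_generic (n : ℕ) {v : ℝ} (hv : v ∈ Ioo (0:ℝ) 1) (m t : ℝ) :
    ((t ≤ 0 → (ℙ {ω | (∑ i ∈ Finset.range n, if U (i+1) ω ≤ v then (1:ℝ) else 0) ≤ m}).toReal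
        ≤ Real.exp (-t * m + n * (v * (Real.exp t - 1)))) ∧
     (0 ≤ t → (ℙ {ω | m ≤ ∑ i ∈ Finset.range n, if U (i+1) ω ≤ v then (1:ℝ) else 0}).toReal
        ≤ Real.exp (-t * m + n * (v * (Real.exp t - 1))))) := by
  classical
  set Y : ℕ → Ω → ℝ := fun i ω => if U i ω ≤ v then (1:ℝ) else 0 with hY
  have hYmeas : ∀ i, Measurable (Y i) :=
    fun i => Measurable.ite ((hmeas i) measurableSet_Iic) measurable_const measurable_const
  have hYindep : iIndepFun Y ℙ := by
    have := hindep.comp (fun _ => fun x : ℝ => if x ≤ v then (1:ℝ) else 0)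
      (fun _ => Measurable.ite measurableSet_Iic measurable_const measurable_const)
    exact this
  set s : Finset ℕ := (Finset.range n).map ⟨fun i => i + 1, add_left_injective 1⟩ with hs
  have hsum : ∀ ω, (∑ i ∈ s, Y i ω) = ∑ i ∈ Finset.range n, if U (i+1) ω ≤ v then (1:ℝ) else 0 := by
    intro ω
    rw [hs, Finset.sum_map]
    rfl
  have hint : ∀ t' : ℝ, Integrable (fun ω => Real.exp (t' * (∑ i ∈ s, Y i) ω)) ℙ := by
    intro t'
    exact hYindep.integrable_exp_mul_sum hYmeas
      (fun i _ => integrable_exp_mul_indicator U hmeas v t' i)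
  have hmgf : ∀ t' : ℝ, mgf (∑ i ∈ s, Y i) ℙ t' ≤ Real.exp (n * (v * (Real.exp t' - 1))) := by
    intro t'
    rw [hYindep.mgf_sum hYmeas s]
    have hcard : s.card = n := by rw [hs, Finset.card_map, Finset.card_range]
    have heach : ∀ i ∈ s, mgf (Y i) ℙ t' = 1 + (Real.exp t' - 1) * v := fun i _ =>
      mgf_indicator U hmeas hunif hv t' i
    rw [Finset.prod_congr rfl heach, Finset.prod_const, hcard]
    have hnn : (0:ℝ) ≤ 1 + (Real.exp t' - 1) * v := by
      nlinarith [Real.exp_pos t', hv.1.le, hv.2.le, Real.exp_pos t']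
    calc (1 + (Real.exp t' - 1) * v) ^ n ≤ (Real.exp ((Real.exp t' - 1) * v)) ^ n := by
          apply pow_le_pow_left₀ hnn
          linarith [Real.add_one_le_exp ((Real.exp t' - 1) * v)]
      _ = Real.exp (n * (v * (Real.exp t' - 1))) := by
          rw [← Real.exp_nat_mul]; ring_nf
  constructor
  · intro ht
    have h := measure_le_le_exp_mul_mgf (X := ∑ i ∈ s, Y i) (μ := ℙ) m ht (hint t)
    have hset : {ω | (∑ i ∈ s, Y i) ω ≤ m}
        = {ω | (∑ i ∈ Finset.range n, if U (i+1) ω ≤ v then (1:ℝ) else 0) ≤ m} := by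
      ext ω; simp only [mem_setOf_eq, Finset.sum_apply, hsum ω]
    rw [hset] at h
    refine h.trans ?_
    rw [Real.exp_add]
    exact mul_le_mul_of_nonneg_left (hmgf t) (Real.exp_nonneg _)
  · intro ht
    have h := measure_ge_le_exp_mul_mgf (X := ∑ i ∈ s, Y i) (μ := ℙ) m ht (hint t)
    have hset : {ω | m ≤ (∑ i ∈ s, Y i) ω}
        = {ω | m ≤ ∑ i ∈ Finset.range n, if U (i+1) ω ≤ v then (1:ℝ) else 0} := by
      ext ω; simp only [mem_setOf_eq, Finset.sum_apply, hsum ω]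
    rw [hset] at h
    refine h.trans ?_
    rw [Real.exp_add]
    exact mul_le_mul_of_nonneg_left (hmgf t) (Real.exp_nonneg _)

omit hmeas hindep hunif in
lemma exp_neg_le_quad {x : ℝ} (hx : 0 ≤ x) : Real.exp (-x) ≤ 1 - x + x^2/2 := by
  have h2 : 1 + x + x^2/2 ≤ Real.exp x := by
    have := Real.sum_le_exp_of_nonneg hx 3
    simp [Finset.sum_range_succ, Nat.factorial] at this
    linarith
  have hpos : (0:ℝ) < 1 + x + x^2/2 := by nlinarith
  have hpos2 : (0:ℝ) < 1 - x + x^2/2 := by nlinarith [sq_nonneg (x-1)]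
  rw [Real.exp_neg]
  rw [inv_le_iff_one_le_mul₀ (Real.exp_pos x)]
  calc (1:ℝ) ≤ (1 - x + x^2/2) * (1 + x + x^2/2) := by nlinarith [sq_nonneg x, sq_nonneg (x^2)]
    _ ≤ (1 - x + x^2/2) * Real.exp x := by
        exact mul_le_mul_of_nonneg_left h2 hpos2.le

omit hmeas hindep hunif in
lemma exp_le_quad {x : ℝ} (h0 : 0 ≤ x) (h1 : x ≤ 1/2) : Real.exp x ≤ 1 + x + 2*x^2 := by
  have hlow : 1 - x ≤ Real.exp (-x) := by linarith [Real.add_one_le_exp (-x)]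
  have hpos : (0:ℝ) < 1 - x := by linarith
  have : Real.exp x ≤ (1 - x)⁻¹ := by
    rw [Real.exp_neg] at hlow
    rw [← inv_inv (Real.exp x)]
    exact inv_anti₀ (by positivity) hlow
  refine this.trans ?_
  rw [inv_le_iff_one_le_mul₀ hpos]
  nlinarith [sq_nonneg x]

lemma tail_lower' {n : ℕ} (hn : 1 ≤ n) {v : ℝ} (hv : v ∈ Ioo (0:ℝ) 1) {d : ℝ} (hd : 0 ≤ d)
    {m : ℝ} (hm : m ≤ n * v - d) :
    (ℙ {ω | (∑ i ∈ Finset.range n, if U (i+1) ω ≤ v then (1:ℝ) else 0) ≤ m}).toReal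
      ≤ Real.exp (-d^2/(2*n)) := by
  have hn' : (0:ℝ) < n := by exact_mod_cast hn
  set t : ℝ := -(d/n) with htdef
  have ht : t ≤ 0 := neg_nonpos.mpr (by positivity)
  have h := (tail_chernoff_generic U hmeas hindep hunif n hv m t).1 ht
  refine h.trans (Real.exp_le_exp.mpr ?_)
  have hq : Real.exp t - 1 ≤ -(d/n) + (d/n)^2/2 := by
    have := exp_neg_le_quad (x := d/n) (by positivity)
    rw [htdef]
    linarith
  have hv0 : (0:ℝ) ≤ v := hv.1.le
  have hv1 : v ≤ 1 := hv.2.le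
  have h1 : (n:ℝ) * (v * (Real.exp t - 1)) ≤ n * (v * (-(d/n) + (d/n)^2/2)) := by
    apply mul_le_mul_of_nonneg_left _ hn'.le
    exact mul_le_mul_of_nonneg_left hq hv0
  have h2 : -t * m ≤ -t * (n*v - d) := by
    apply mul_le_mul_of_nonneg_left hm
    simp only [htdef, neg_neg]; positivity
  have hils : -t * (n*v-d) + n * (v * (-(d/n) + (d/n)^2/2)) ≤ -d^2/(2*n) := by
    have hne : (n:ℝ) ≠ 0 := hn'.ne'
    have expand : -t * (n*v-d) + n * (v * (-(d/n) + (d/n)^2/2))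
        = -d^2/n + v*d^2/(2*n) := by rw [htdef]; field_simp; ring
    have hb : v*d^2 ≤ d^2 := by nlinarith [sq_nonneg d]
    have hb' : v*d^2/(2*n) ≤ d^2/(2*n) := by gcongr
    have heq : -d^2/n + d^2/(2*n) = -d^2/(2*n) := by field_simp; ring
    linarith [expand.le, expand.ge]
  clear_value t
  linarith

lemma tail_upper' {n : ℕ} (hn : 1 ≤ n) {v : ℝ} (hv : v ∈ Ioo (0:ℝ) 1) {d : ℝ} (hd : 0 ≤ d)
    (hdn : d ≤ 2*n) {m : ℝ} (hm : n * v + d ≤ m) :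
    (ℙ {ω | m ≤ ∑ i ∈ Finset.range n, if U (i+1) ω ≤ v then (1:ℝ) else 0}).toReal
      ≤ Real.exp (-d^2/(8*n)) := by
  have hn' : (0:ℝ) < n := by exact_mod_cast hn
  set t : ℝ := d/(4*n) with htdef
  have ht : 0 ≤ t := by rw [htdef]; positivity
  have ht2 : t ≤ 1/2 := by
    rw [htdef, div_le_div_iff₀ (by positivity) (by norm_num)]
    linarith
  have h := (tail_chernoff_generic U hmeas hindep hunif n hv m t).2 ht
  refine h.trans (Real.exp_le_exp.mpr ?_)
  have hq : Real.exp t - 1 ≤ t + 2*t^2 := by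
    linarith [exp_le_quad ht ht2]
  have hv0 : (0:ℝ) ≤ v := hv.1.le
  have hv1 : v ≤ 1 := hv.2.le
  have h1 : (n:ℝ) * (v * (Real.exp t - 1)) ≤ n * (v * (t + 2*t^2)) := by
    apply mul_le_mul_of_nonneg_left _ hn'.le
    apply mul_le_mul_of_nonneg_left _ hv0
    exact hq
  have h2 : -t * m ≤ -t * (n*v + d) := by
    have := neg_le_neg (mul_le_mul_of_nonneg_left hm ht)
    linarith [mul_le_mul_of_nonneg_left hm ht]
  have hils : -t * (n*v+d) + n * (v * (t + 2*t^2)) ≤ -d^2/(8*n) := by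
    have hne : (n:ℝ) ≠ 0 := hn'.ne'
    have expand : -t * (n*v+d) + n * (v * (t + 2*t^2))
        = -d^2/(4*n) + v*d^2/(8*n) := by rw [htdef]; field_simp; ring
    have hb : v*d^2 ≤ d^2 := by nlinarith [sq_nonneg d]
    have hb' : v*d^2/(8*n) ≤ d^2/(8*n) := by gcongr
    have heq : -d^2/(4*n) + d^2/(8*n) = -d^2/(8*n) := by field_simp; ring
    linarith [expand.le, expand.ge]
  clear_value t
  linarith

end Prob

lemma arith1' {x y : ℝ} (hx : 0 < x) : -(x*y)^2/(2*x) ≤ -(x*y^2)/32 := by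
  rw [div_le_div_iff₀ (by positivity) (by norm_num)]
  nlinarith [sq_nonneg (x*y)]

lemma arith2' {x y : ℝ} (hx : 0 < x) (h2 : 2 ≤ x*y) : -(x*y-1)^2/(8*x) ≤ -(x*y^2)/32 := by
  rw [div_le_div_iff₀ (by positivity) (by norm_num)]
  nlinarith [mul_nonneg (by linarith : (0:ℝ) ≤ x*y - 2) (by linarith : (0:ℝ) ≤ 3*(x*y) - 2)]

end Helpers

set_option maxHeartbeats 2000000 in
/-- Large deviation bound for `√n |α_n - α| · |U_{k:n} - α|^ε`. -/
theorem rate_times_uniform_order_statistic_negligible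
    {Ω : Type*} [MeasureSpace Ω] [IsProbabilityMeasure (ℙ : Measure Ω)]
    -- i.i.d. uniform (0,1) random variables
    (U : ℕ → Ω → ℝ) (hmeas : ∀ i, Measurable (U i))
    (hindep : iIndepFun U ℙ)
    (hunif : ∀ i, Measure.map (U i) ℙ = volume.restrict (Ioo (0 : ℝ) 1))
    (ε : ℝ) (hε : ε ∈ Ioc (0 : ℝ) 1) (α : ℝ) (hα : α ∈ Ioo (0 : ℝ) 1)
    -- the sequence α_n with |α_n - α| = O(n^{-1/(2+ε)})
    (αn : ℕ → ℝ)
    (hrate : (fun n : ℕ => |αn n - α|) =O[atTop] fun n : ℕ => (n : ℝ) ^ (-(1 / (2 + ε))))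
    (C : ℝ) (hC : 0 < C)
    (a : ℕ → ℝ) (ha : Tendsto a atTop (nhds 0))
    (halow : ∀ n, a n ≥ 1 / Real.log (1 + n)) :
    (fun n : ℕ => (ℙ {ω |
        Real.sqrt n * |αn n - α| *
          |orderStat n ⌊(n : ℝ) * α⌋₊ (fun j => U j ω) - α| ^ ε >
        C * (a n) ^ (-(1 / 2) : ℝ) * (n : ℝ) ^ (-(ε / (2 * (2 + ε))))}).toReal) =o[atTop]
      fun n : ℕ => 1 - Phi (a n * (n : ℝ) ^ (ε / (2 * (2 + ε)))) := by
  obtain ⟨hε0, hε1⟩ := hε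
  obtain ⟨hα0, hα1⟩ := hα
  have h2ε : (0:ℝ) < 2 + ε := by linarith
  set q : ℝ := ε / (2 * (2 + ε)) with hqdef
  have hq : 0 < q := by rw [hqdef]; positivity
  -- rate constant
  obtain ⟨K, hK0, hKO⟩ := hrate.exists_pos
  have hKev : ∀ᶠ n : ℕ in atTop, |αn n - α| ≤ K * (n:ℝ) ^ (-(1/(2+ε))) := by
    have := hKO.bound
    filter_upwards [this, eventually_ge_atTop 1] with n hn hn1
    have hn0 : (0:ℝ) < n := by exact_mod_cast hn1
    have h1 : ‖|αn n - α|‖ = |αn n - α| := by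
      rw [Real.norm_eq_abs, abs_abs]
    have h2 : ‖(n:ℝ) ^ (-(1/(2+ε)))‖ = (n:ℝ) ^ (-(1/(2+ε))) := by
      rw [Real.norm_eq_abs, abs_of_nonneg (Real.rpow_nonneg hn0.le _)]
    rw [h1, h2] at hn
    exact hn
  set c₀ : ℝ := (C / K) ^ (1/ε : ℝ) with hc₀def
  have hc₀ : 0 < c₀ := Real.rpow_pos_of_pos (by positivity) _
  set t : ℕ → ℝ := fun n => c₀ * (a n) ^ (-(1/(2*ε)) : ℝ) * (n:ℝ) ^ (-(1/(2+ε)) : ℝ) with htdef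
  set c₁ : ℝ := c₀^2 / 32 with hc₁def
  have hc₁ : 0 < c₁ := by rw [hc₁def]; positivity
  clear_value q c₀ t c₁
  -- positivity of a n
  have haev : ∀ᶠ n : ℕ in atTop, 0 < a n := by
    filter_upwards [eventually_ge_atTop 1] with n hn
    have hn1 : (1:ℝ) ≤ n := by exact_mod_cast hn
    have hlog : 0 < Real.log (1 + n) := Real.log_pos (by linarith)
    exact lt_of_lt_of_le (by positivity) (halow n)
  have ha1ev : ∀ᶠ n : ℕ in atTop, a n ≤ 1 :=
    (ha.eventually (eventually_le_nhds one_pos)).mono fun n h => h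
  -- t n → 0
  have htto : Tendsto t atTop (nhds 0) := by
    have hβ : (0:ℝ) < 1/(2*ε) := by positivity
    have hδ : (0:ℝ) < 1/(2+ε) := by positivity
    have hb := tendsto_logpow_rpow hβ hδ
    have hb' : Tendsto (fun n : ℕ => c₀ * ((Real.log (1+n))^(1/(2*ε)) * (n:ℝ)^(-(1/(2+ε))))) atTop
        (nhds 0) := by simpa using hb.const_mul c₀
    apply squeeze_zero' ?_ ?_ hb'
    · filter_upwards [haev, eventually_ge_atTop 1] with n han hn1
      have hn0 : (0:ℝ) < n := by exact_mod_cast hn1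
      rw [htdef]; positivity
    · filter_upwards [haev, eventually_ge_atTop 1] with n han hn1
      have hn0 : (0:ℝ) < n := by exact_mod_cast hn1
      have hlog : 0 < Real.log (1 + n) := Real.log_pos (by
        have : (1:ℝ) ≤ n := by exact_mod_cast hn1
        linarith)
      have hinv : (a n)⁻¹ ≤ Real.log (1 + n) := by
        rw [inv_le_comm₀ han hlog]
        calc (Real.log (1+n))⁻¹ = 1 / Real.log (1+n) := (one_div _).symm
          _ ≤ a n := halow n
      have h1 : (a n) ^ (-(1/(2*ε)) : ℝ) = ((a n)⁻¹) ^ ((1/(2*ε)) : ℝ) := by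
        rw [← Real.rpow_neg_one, ← Real.rpow_mul han.le]
        ring_nf
      have h2 : ((a n)⁻¹) ^ ((1/(2*ε)) : ℝ) ≤ (Real.log (1+n)) ^ ((1/(2*ε)) : ℝ) :=
        Real.rpow_le_rpow (by positivity) hinv hβ.le
      have h3 : (t n) ≤ c₀ * ((Real.log (1+n))^(1/(2*ε)) * (n:ℝ)^(-(1/(2+ε)))) := by
        rw [htdef]
        have := mul_le_mul_of_nonneg_right (h1 ▸ h2) (Real.rpow_nonneg hn0.le (-(1/(2+ε))))
        calc c₀ * (a n) ^ (-(1/(2*ε)) : ℝ) * (n:ℝ) ^ (-(1/(2+ε)) : ℝ)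
            = c₀ * ((a n) ^ (-(1/(2*ε)) : ℝ) * (n:ℝ) ^ (-(1/(2+ε)) : ℝ)) := by ring
          _ ≤ c₀ * ((Real.log (1+n))^(1/(2*ε)) * (n:ℝ)^(-(1/(2+ε)))) := by
              exact mul_le_mul_of_nonneg_left this hc₀.le
      exact h3
  -- n * t n → ∞
  have hntto : Tendsto (fun n : ℕ => (n:ℝ) * t n) atTop atTop := by
    have hδ' : (0:ℝ) < 1 - 1/(2+ε) := by
      rw [sub_pos, div_lt_one h2ε]; linarith
    have hlow : Tendsto (fun n : ℕ => c₀ * (n:ℝ)^(1 - 1/(2+ε))) atTop atTop := by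
      apply Tendsto.const_mul_atTop hc₀
      exact (tendsto_rpow_atTop hδ').comp tendsto_natCast_atTop_atTop
    apply tendsto_atTop_mono' atTop ?_ hlow
    filter_upwards [haev, ha1ev, eventually_ge_atTop 1] with n han ha1 hn1
    have hn0 : (0:ℝ) < n := by exact_mod_cast hn1
    have hrw : (n:ℝ) * t n = c₀ * (a n) ^ (-(1/(2*ε)) : ℝ) * (n:ℝ)^(1 - 1/(2+ε)) := by
      rw [htdef]
      have : (n:ℝ)^(1 - 1/(2+ε)) = (n:ℝ) * (n:ℝ)^(-(1/(2+ε)) : ℝ) := by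
        rw [Real.rpow_sub hn0, Real.rpow_one, Real.rpow_neg hn0.le, div_eq_mul_inv]
      rw [this]; ring
    have hage : (1:ℝ) ≤ (a n) ^ (-(1/(2*ε)) : ℝ) :=
      Real.one_le_rpow_of_pos_of_le_one_of_nonpos han ha1 (neg_nonpos.mpr (by positivity))
    rw [hrw]
    have := mul_le_mul_of_nonneg_right
      (mul_le_mul_of_nonneg_left hage hc₀.le) (Real.rpow_nonneg hn0.le (1 - 1/(2+ε)))
    calc c₀ * (n:ℝ)^(1 - 1/(2+ε)) = c₀ * 1 * (n:ℝ)^(1 - 1/(2+ε)) := by ring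
      _ ≤ c₀ * (a n) ^ (-(1/(2*ε)) : ℝ) * (n:ℝ)^(1 - 1/(2+ε)) := this
  -- the key probability bound
  have key : ∀ᶠ n : ℕ in atTop,
      (ℙ {ω | Real.sqrt n * |αn n - α| *
          |orderStat n ⌊(n : ℝ) * α⌋₊ (fun j => U j ω) - α| ^ ε >
          C * (a n) ^ (-(1 / 2) : ℝ) * (n : ℝ) ^ (-q)}).toReal
        ≤ 2 * Real.exp (-((n:ℝ) * (t n)^2)/32) := by
    have hnα : Tendsto (fun n : ℕ => (n:ℝ) * α) atTop atTop :=
      Tendsto.atTop_mul_const hα0 tendsto_natCast_atTop_atTop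
    filter_upwards [hKev, haev, ha1ev, eventually_ge_atTop 1,
      htto.eventually (eventually_lt_nhds (lt_min hα0 (by linarith) : (0:ℝ) < min α (1-α))),
      hntto.eventually_ge_atTop 2, hnα.eventually_ge_atTop 1] with n hKn han ha1 hn1 htmin hnt2 hnα1
    have hn0 : (0:ℝ) < n := by exact_mod_cast hn1
    have htpos : 0 < t n := by rw [htdef]; positivity
    have htα : t n < α := lt_of_lt_of_le htmin (min_le_left _ _)
    have htα' : t n < 1 - α := lt_of_lt_of_le htmin (min_le_right _ _)
    set k := ⌊(n : ℝ) * α⌋₊ with hkdef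
    have hk1 : 1 ≤ k := Nat.le_floor (by exact_mod_cast hnα1)
    have hkn : k ≤ n := by
      have h1 : (n:ℝ) * α ≤ (n:ℝ) := by nlinarith
      calc k ≤ ⌊(n:ℝ)⌋₊ := Nat.floor_le_floor h1
        _ = n := Nat.floor_natCast n
    have hkα : (k:ℝ) ≤ (n:ℝ) * α := Nat.floor_le (by positivity)
    have hkα2 : (n:ℝ) * α - 1 < (k:ℝ) := by
      have := Nat.lt_floor_add_one ((n:ℝ) * α)
      push_cast at this ⊢
      linarith
    set A := {ω : Ω | α + t n < orderStat n k (fun j => U j ω)} with hAdef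
    set B := {ω : Ω | orderStat n k (fun j => U j ω) < α - t n} with hBdef
    -- event inclusion
    have hsub : {ω : Ω | Real.sqrt n * |αn n - α| *
          |orderStat n k (fun j => U j ω) - α| ^ ε >
          C * (a n) ^ (-(1 / 2) : ℝ) * (n : ℝ) ^ (-q)} ⊆ A ∪ B := by
      intro ω hω
      simp only [mem_setOf_eq] at hω
      set D := orderStat n k (fun j => U j ω) - α with hDdef
      have hXle : Real.sqrt n * |αn n - α| ≤ K * (n:ℝ)^q := by
        have hs : Real.sqrt n = (n:ℝ)^((1:ℝ)/2) := Real.sqrt_eq_rpow _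
        have h1 : Real.sqrt n * |αn n - α| ≤ (n:ℝ)^((1:ℝ)/2) * (K * (n:ℝ)^(-(1/(2+ε)))) := by
          rw [hs]
          exact mul_le_mul_of_nonneg_left hKn (Real.rpow_nonneg hn0.le _)
        have h2 : (n:ℝ)^((1:ℝ)/2) * (K * (n:ℝ)^(-(1/(2+ε)))) = K * (n:ℝ)^q := by
          rw [show (n:ℝ)^((1:ℝ)/2) * (K * (n:ℝ)^(-(1/(2+ε)))) =
              K * ((n:ℝ)^((1:ℝ)/2) * (n:ℝ)^(-(1/(2+ε)))) by ring,
            ← Real.rpow_add hn0]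
          congr 1
          rw [hqdef]
          field_simp
          congr 1
          ring
        linarith
      have hKnq : (0:ℝ) < K * (n:ℝ)^q := by positivity
      have hDε : (0:ℝ) ≤ |D| ^ ε := Real.rpow_nonneg (abs_nonneg _) _
      have hB1 : C * (a n) ^ (-(1 / 2) : ℝ) * (n : ℝ) ^ (-q) < (K * (n:ℝ)^q) * |D| ^ ε := by
        calc C * (a n) ^ (-(1 / 2) : ℝ) * (n : ℝ) ^ (-q)
            < Real.sqrt n * |αn n - α| * |D| ^ ε := hω
          _ ≤ (K * (n:ℝ)^q) * |D| ^ ε := mul_le_mul_of_nonneg_right hXle hDε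
      set Bn := C * (a n) ^ (-(1 / 2) : ℝ) * (n : ℝ) ^ (-q) / (K * (n:ℝ)^q) with hBndef
      have hBnpos : 0 < Bn := by rw [hBndef]; positivity
      have hBn : Bn < |D| ^ ε := by
        rw [hBndef, div_lt_iff₀ hKnq]
        calc C * (a n) ^ (-(1 / 2) : ℝ) * (n : ℝ) ^ (-q)
            < (K * (n:ℝ)^q) * |D| ^ ε := hB1
          _ = |D| ^ ε * (K * (n:ℝ)^q) := by ring
      -- Bn ^ (1/ε) = t n
      have hBneq : Bn ^ ((1:ℝ)/ε) = t n := by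
        have hεne : ε ≠ 0 := ne_of_gt hε0
        have e1 : Bn = (C/K) * (a n) ^ (-(1 / 2) : ℝ) * (n:ℝ)^(-q-q) := by
          rw [hBndef, Real.rpow_sub hn0]
          field_simp
        have e2 : ((a n) ^ (-(1/2) : ℝ)) ^ ((1:ℝ)/ε) = (a n) ^ (-(1/(2*ε)) : ℝ) := by
          rw [← Real.rpow_mul han.le]
          congr 1
          field_simp
        have e3 : ((n:ℝ) ^ (-q-q)) ^ ((1:ℝ)/ε) = (n:ℝ) ^ (-(1/(2+ε)) : ℝ) := by
          rw [← Real.rpow_mul hn0.le]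
          congr 1
          rw [hqdef]
          field_simp
          ring
        rw [e1, Real.mul_rpow (by positivity) (Real.rpow_nonneg hn0.le _),
          Real.mul_rpow (by positivity) (Real.rpow_nonneg han.le _), e2, e3,
          htdef, hc₀def]
      have hD : t n < |D| := by
        have h1 : Bn ^ ((1:ℝ)/ε) < (|D| ^ ε) ^ ((1:ℝ)/ε) :=
          Real.rpow_lt_rpow hBnpos.le hBn (by positivity)
        have h2 : (|D| ^ ε) ^ ((1:ℝ)/ε) = |D| := by
          rw [← Real.rpow_mul (abs_nonneg _)]
          rw [show ε * ((1:ℝ)/ε) = 1 by field_simp]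
          exact Real.rpow_one _
        rw [hBneq, h2] at h1
        exact h1
      rcases lt_abs.mp hD with h | h
      · left
        simp only [hAdef, mem_setOf_eq]
        rw [hDdef] at h; linarith
      · right
        simp only [hBdef, mem_setOf_eq]
        rw [hDdef] at h; linarith
    -- tail bounds
    have hvp : α + t n ∈ Ioo (0:ℝ) 1 := ⟨by linarith, by linarith⟩
    have hvm : α - t n ∈ Ioo (0:ℝ) 1 := ⟨by linarith, by linarith⟩
    have hAbound : (ℙ A).toReal ≤ Real.exp (-((n:ℝ) * t n)^2/(2*n)) := by
      have hsubA : A ⊆ {ω : Ω |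
          (∑ i ∈ Finset.range n, if U (i+1) ω ≤ (α + t n) then (1:ℝ) else 0) ≤ (k:ℝ) - 1} := by
        intro ω hω
        simp only [hAdef, mem_setOf_eq] at hω ⊢
        have hcount := count_le_of_orderStat_gt hk1 hkn (x := fun j => U j ω) hω
        have hcast : (∑ i ∈ Finset.range n, if U (i+1) ω ≤ (α + t n) then (1:ℝ) else 0)
            = ((∑ i ∈ Finset.range n, if U (i+1) ω ≤ (α + t n) then 1 else 0 : ℕ) : ℝ) := by
          push_cast
          rfl
        rw [hcast]
        have h1 : ((∑ i ∈ Finset.range n, if U (i+1) ω ≤ (α + t n) then 1 else 0 : ℕ) : ℝ)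
            ≤ ((k - 1 : ℕ) : ℝ) := by exact_mod_cast hcount
        have h2 : ((k - 1 : ℕ) : ℝ) = (k:ℝ) - 1 := by
          rw [Nat.cast_sub hk1]; norm_num
        linarith
      calc (ℙ A).toReal
          ≤ (ℙ {ω : Ω | (∑ i ∈ Finset.range n, if U (i+1) ω ≤ (α + t n) then (1:ℝ) else 0)
              ≤ (k:ℝ) - 1}).toReal :=
            ENNReal.toReal_mono (measure_ne_top _ _) (measure_mono hsubA)
        _ ≤ Real.exp (-((n:ℝ) * t n)^2/(2*n)) := by
            apply tail_lower' U hmeas hindep hunif hn1 hvp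
              (mul_nonneg hn0.le htpos.le)
            nlinarith
    have hBbound : (ℙ B).toReal ≤ Real.exp (-((n:ℝ) * t n - 1)^2/(8*n)) := by
      have hsubB : B ⊆ {ω : Ω | (k:ℝ) ≤
          ∑ i ∈ Finset.range n, if U (i+1) ω ≤ (α - t n) then (1:ℝ) else 0} := by
        intro ω hω
        simp only [hBdef, mem_setOf_eq] at hω ⊢
        have hcount := count_ge_of_orderStat_lt hk1 hkn (x := fun j => U j ω) hω
        have hcast : (∑ i ∈ Finset.range n, if U (i+1) ω ≤ (α - t n) then (1:ℝ) else 0)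
            = ((∑ i ∈ Finset.range n, if U (i+1) ω ≤ (α - t n) then 1 else 0 : ℕ) : ℝ) := by
          push_cast
          rfl
        rw [hcast]
        exact_mod_cast hcount
      calc (ℙ B).toReal
          ≤ (ℙ {ω : Ω | (k:ℝ) ≤
              ∑ i ∈ Finset.range n, if U (i+1) ω ≤ (α - t n) then (1:ℝ) else 0}).toReal :=
            ENNReal.toReal_mono (measure_ne_top _ _) (measure_mono hsubB)
        _ ≤ Real.exp (-((n:ℝ) * t n - 1)^2/(8*n)) := by
            apply tail_upper' U hmeas hindep hunif hn1 hvm (by linarith [hnt2]) ?_ ?_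
            · have hnt1 : (n:ℝ) * t n ≤ (n:ℝ) * 1 :=
                mul_le_mul_of_nonneg_left (by linarith) hn0.le
              linarith
            · have : (n:ℝ) * (α - t n) + ((n:ℝ) * t n - 1) = (n:ℝ) * α - 1 := by ring
              linarith
    -- combine
    calc (ℙ {ω : Ω | Real.sqrt n * |αn n - α| *
          |orderStat n k (fun j => U j ω) - α| ^ ε >
          C * (a n) ^ (-(1 / 2) : ℝ) * (n : ℝ) ^ (-q)}).toReal
        ≤ (ℙ (A ∪ B)).toReal := ENNReal.toReal_mono (measure_ne_top _ _) (measure_mono hsub)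
      _ ≤ (ℙ A).toReal + (ℙ B).toReal := by
          rw [← ENNReal.toReal_add (measure_ne_top _ _) (measure_ne_top _ _)]
          exact ENNReal.toReal_mono
            (ENNReal.add_ne_top.mpr ⟨measure_ne_top _ _, measure_ne_top _ _⟩)
            (measure_union_le _ _)
      _ ≤ Real.exp (-((n:ℝ) * t n)^2/(2*n)) + Real.exp (-((n:ℝ) * t n - 1)^2/(8*n)) :=
          add_le_add hAbound hBbound
      _ ≤ 2 * Real.exp (-((n:ℝ) * (t n)^2)/32) := by
          have hx1 : -((n:ℝ) * t n)^2/(2*(n:ℝ)) ≤ -((n:ℝ) * (t n)^2)/32 := arith1' hn0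
          have hx2 : -((n:ℝ) * t n - 1)^2/(8*(n:ℝ)) ≤ -((n:ℝ) * (t n)^2)/32 := arith2' hn0 hnt2
          have e1 := Real.exp_le_exp.mpr hx1
          have e2 := Real.exp_le_exp.mpr hx2
          linarith
  -- Gaussian lower bound
  set G : ℝ := (Real.sqrt (2 * Real.pi))⁻¹ with hGdef
  have hG : 0 < G := by
    rw [hGdef]
    have := Real.pi_pos
    positivity
  have glower : ∀ᶠ n : ℕ in atTop,
      G * Real.exp (-(a n * (n:ℝ)^q + 1)^2/2) ≤ 1 - Phi (a n * (n:ℝ)^q) := by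
    filter_upwards [haev, eventually_ge_atTop 1] with n han hn1
    have hn0 : (0:ℝ) < n := by exact_mod_cast hn1
    exact one_sub_Phi_ge (by positivity)
  -- exponent difference tends to -infinity
  have ratio : Tendsto (fun n : ℕ =>
      (-((n:ℝ) * (t n)^2)/32) - (-(a n * (n:ℝ)^q + 1)^2/2)) atTop atBot := by
    have hεne : ε ≠ 0 := ne_of_gt hε0
    set η : ℝ := (c₁/2) ^ ((2 + 1/ε)⁻¹ : ℝ) with hηdef
    have hη : 0 < η := Real.rpow_pos_of_pos (by positivity) _
    have hbound : Tendsto (fun n : ℕ => 1 - (c₁/2) * (n:ℝ)^(2*q)) atTop atBot := by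
      have h1 : Tendsto (fun n : ℕ => (n:ℝ)^(2*q)) atTop atTop :=
        (tendsto_rpow_atTop (by positivity)).comp tendsto_natCast_atTop_atTop
      have h2 : Tendsto (fun n : ℕ => (c₁/2) * (n:ℝ)^(2*q)) atTop atTop :=
        h1.const_mul_atTop (by positivity)
      have h3 : Tendsto (fun n : ℕ => -((c₁/2) * (n:ℝ)^(2*q))) atTop atBot :=
        tendsto_neg_atTop_atBot.comp h2
      have h4 := tendsto_atBot_add_const_left atTop 1 h3
      simpa [sub_eq_add_neg] using h4
    apply tendsto_atBot_mono' atTop ?_ hbound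
    filter_upwards [haev, ha1ev, ha.eventually (eventually_le_nhds hη), eventually_ge_atTop 1]
      with n han ha1 haη hn1
    have hn0 : (0:ℝ) < n := by exact_mod_cast hn1
    -- n * t n ^ 2 = c₀^2 * a n ^(-1/ε) * n^(2q)
    have hnt : (n:ℝ) * (t n)^2 = c₀^2 * (a n)^(-(1/ε) : ℝ) * (n:ℝ)^(2*q) := by
      rw [htdef]
      have e1 : ((a n) ^ (-(1/(2*ε)) : ℝ))^2 = (a n)^(-(1/ε) : ℝ) := by
        rw [← Real.rpow_natCast ((a n) ^ (-(1/(2*ε)) : ℝ)) 2, ← Real.rpow_mul han.le]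
        congr 1
        push_cast
        field_simp
      have e2 : (n:ℝ) * (((n:ℝ) ^ (-(1/(2+ε)) : ℝ))^2) = (n:ℝ)^(2*q) := by
        have b1 : ((n:ℝ) ^ (-(1/(2+ε)) : ℝ))^2 = (n:ℝ)^((-(1/(2+ε)))*2 : ℝ) := by
          rw [← Real.rpow_natCast ((n:ℝ) ^ (-(1/(2+ε)) : ℝ)) 2, ← Real.rpow_mul hn0.le]
          norm_num
        have b2 : (n:ℝ)^((1 + (-(1/(2+ε)))*2) : ℝ) = (n:ℝ) * (n:ℝ)^((-(1/(2+ε)))*2 : ℝ) := by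
          rw [Real.rpow_add hn0, Real.rpow_one]
        rw [b1, ← b2]
        congr 1
        rw [hqdef]
        field_simp
        ring
      calc (n:ℝ) * (c₀ * (a n) ^ (-(1/(2*ε)) : ℝ) * (n:ℝ) ^ (-(1/(2+ε)) : ℝ))^2
          = c₀^2 * ((a n) ^ (-(1/(2*ε)) : ℝ))^2 * ((n:ℝ) * ((n:ℝ) ^ (-(1/(2+ε)) : ℝ))^2) := by
            ring
        _ = c₀^2 * (a n)^(-(1/ε) : ℝ) * (n:ℝ)^(2*q) := by rw [e1, e2]
    have hage : (1:ℝ) ≤ (a n)^(-(1/ε) : ℝ) :=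
      Real.one_le_rpow_of_pos_of_le_one_of_nonpos han ha1 (neg_nonpos.mpr (by positivity))
    have ha2 : (a n)^2 ≤ (c₁/2) * (a n)^(-(1/ε) : ℝ) := by
      have h1 : (a n)^((2 + 1/ε) : ℝ) ≤ c₁/2 := by
        calc (a n)^((2 + 1/ε) : ℝ) ≤ η^((2 + 1/ε) : ℝ) :=
            Real.rpow_le_rpow han.le haη (by positivity)
          _ = c₁/2 := by
              rw [hηdef, ← Real.rpow_mul (by positivity)]
              rw [inv_mul_cancel₀ (by positivity)]
              exact Real.rpow_one _
      have h2 : (a n)^2 = (a n)^((2 + 1/ε) : ℝ) * (a n)^(-(1/ε) : ℝ) := by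
        rw [← Real.rpow_add han, ← Real.rpow_natCast (a n) 2]
        congr 1
        push_cast
        ring
      rw [h2]
      exact mul_le_mul_of_nonneg_right h1 (Real.rpow_nonneg han.le _)
    have hsq : (a n * (n:ℝ)^q + 1)^2/2 ≤ (a n)^2 * (n:ℝ)^(2*q) + 1 := by
      have e3 : ((n:ℝ)^q)^2 = (n:ℝ)^(2*q) := by
        rw [← Real.rpow_natCast ((n:ℝ)^q) 2, ← Real.rpow_mul hn0.le]
        congr 1
        push_cast
        ring
      nlinarith [sq_nonneg (a n * (n:ℝ)^q - 1), sq_nonneg (a n * (n:ℝ)^q)]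
    have hnq : (1:ℝ) ≤ (n:ℝ)^(2*q) :=
      Real.one_le_rpow (by exact_mod_cast hn1) (by positivity)
    have hfinal : (-((n:ℝ) * (t n)^2)/32) - (-(a n * (n:ℝ)^q + 1)^2/2)
        ≤ 1 - (c₁/2) * (n:ℝ)^(2*q) := by
      have h1 : ((n:ℝ) * (t n)^2)/32 = c₁ * (a n)^(-(1/ε) : ℝ) * (n:ℝ)^(2*q) := by
        rw [hnt, hc₁def]; ring
      have h2 : (a n)^2 * (n:ℝ)^(2*q) ≤ (c₁/2) * (a n)^(-(1/ε) : ℝ) * (n:ℝ)^(2*q) := by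
        apply mul_le_mul_of_nonneg_right ha2 (Real.rpow_nonneg hn0.le _)
      have h3 : (c₁/2) * (n:ℝ)^(2*q) ≤ (c₁/2) * (a n)^(-(1/ε) : ℝ) * (n:ℝ)^(2*q) := by
        have := mul_le_mul_of_nonneg_right
          (mul_le_mul_of_nonneg_left hage (by positivity : (0:ℝ) ≤ c₁/2))
          (Real.rpow_nonneg hn0.le (2*q))
        calc (c₁/2) * (n:ℝ)^(2*q) = (c₁/2) * 1 * (n:ℝ)^(2*q) := by ring
          _ ≤ (c₁/2) * (a n)^(-(1/ε) : ℝ) * (n:ℝ)^(2*q) := this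
      have h4 : -((n:ℝ) * (t n)^2)/32 = -(c₁ * (a n)^(-(1/ε) : ℝ) * (n:ℝ)^(2*q)) := by
        rw [← h1]; ring
      rw [h4]
      have h5 : (-(a n * (n:ℝ)^q + 1)^2/2) = -((a n * (n:ℝ)^q + 1)^2/2) := by ring
      rw [h5]
      nlinarith
    exact hfinal
  -- conclusion
  rw [Asymptotics.isLittleO_iff]
  intro c hc
  have hexp : Tendsto (fun n : ℕ => Real.exp
      ((-((n:ℝ) * (t n)^2)/32) - (-(a n * (n:ℝ)^q + 1)^2/2))) atTop (nhds 0) :=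
    Real.tendsto_exp_atBot.comp ratio
  have hev2 : ∀ᶠ n : ℕ in atTop, Real.exp
      ((-((n:ℝ) * (t n)^2)/32) - (-(a n * (n:ℝ)^q + 1)^2/2)) ≤ c * G / 2 := by
    have := hexp.eventually (eventually_le_nhds (by positivity : (0:ℝ) < c * G / 2))
    exact this
  filter_upwards [key, glower, hev2] with n hkey hgl hev'
  have hRHS : 0 < 1 - Phi (a n * (n:ℝ)^q) :=
    lt_of_lt_of_le (by positivity) hgl
  rw [Real.norm_eq_abs, Real.norm_eq_abs, abs_of_nonneg ENNReal.toReal_nonneg,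
    abs_of_nonneg hRHS.le]
  calc (ℙ {ω | Real.sqrt n * |αn n - α| *
          |orderStat n ⌊(n : ℝ) * α⌋₊ (fun j => U j ω) - α| ^ ε >
          C * (a n) ^ (-(1 / 2) : ℝ) * (n : ℝ) ^ (-q)}).toReal
      ≤ 2 * Real.exp (-((n:ℝ) * (t n)^2)/32) := hkey
    _ = 2 * Real.exp ((-((n:ℝ) * (t n)^2)/32) - (-(a n * (n:ℝ)^q + 1)^2/2))
          * Real.exp (-(a n * (n:ℝ)^q + 1)^2/2) := by
        rw [mul_assoc, ← Real.exp_add]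
        ring_nf
    _ ≤ 2 * (c * G / 2) * Real.exp (-(a n * (n:ℝ)^q + 1)^2/2) := by
        apply mul_le_mul_of_nonneg_right _ (Real.exp_nonneg _)
        exact mul_le_mul_of_nonneg_left hev' (by norm_num)
    _ = c * (G * Real.exp (-(a n * (n:ℝ)^q + 1)^2/2)) := by ring
    _ ≤ c * (1 - Phi (a n * (n:ℝ)^q)) := mul_le_mul_of_nonneg_left hgl hc.le
end
end
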